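/- arXiv:1711.02936 — 4 statements merged into one kernel-verified Lean document; each statement's English description precedes it below -/
import Mathlib

section
/- If P ⊆ ℝ^d is a polytope (convex hull of a finite set) with 0 in its interior, then its polar dual P^∨ is again a polytope with 0 in its interior. -/
open Set

noncomputable section

/-- Standard dot product on `ℝ^d`. -/
def dotp {d : ℕ} (v x : Fin d → ℝ) : ℝ := ∑ i, v i * x i

/-- Polar dual `P^∨ = {v | ⟨v,x⟩ ≤ 1 ∀ x ∈ P}`. -/
def polarDual {d : ℕ} (P : Set (Fin d → ℝ)) : Set (Fin d → ℝ) :=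
  {v | ∀ x ∈ P, dotp v x ≤ 1}

/-- A point of `ℝ^d` lying in the lattice `ℤ^d`. -/
def IsLatticePt {d : ℕ} (x : Fin d → ℝ) : Prop := ∀ i, ∃ n : ℤ, x i = (n : ℝ)

/-- A polytope: convex hull of finitely many points. -/
def IsPolytope {d : ℕ} (P : Set (Fin d → ℝ)) : Prop :=
  ∃ V : Finset (Fin d → ℝ), P = convexHull ℝ (V : Set (Fin d → ℝ))

/-- A lattice polytope: convex hull of finitely many lattice points. -/
def IsLatticePolytope {d : ℕ} (P : Set (Fin d → ℝ)) : Prop :=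
  ∃ V : Finset (Fin d → ℝ), (∀ x ∈ V, IsLatticePt x) ∧
    P = convexHull ℝ (V : Set (Fin d → ℝ))

/-- `F` is a face of `P`: the subset of `P` where some linear functional bounded
above on `P` attains its maximum. -/
def IsFace {d : ℕ} (P F : Set (Fin d → ℝ)) : Prop :=
  ∃ (c : Fin d → ℝ) (b : ℝ), (∀ x ∈ P, dotp c x ≤ b) ∧ F = {x ∈ P | dotp c x = b}

/-- Dimension of a subset of `ℝ^d` (dimension of its affine hull). -/
def fdim {d : ℕ} (F : Set (Fin d → ℝ)) : ℕ := Module.finrank ℝ (vectorSpan ℝ F)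

/-- A facet is a face of dimension `d - 1`. -/
def IsFacet {d : ℕ} (P F : Set (Fin d → ℝ)) : Prop :=
  IsFace P F ∧ fdim F = d - 1

/-- The lattice `ℤ^d` sitting inside `ℝ^d`, as a `ℤ`-submodule. -/
def latticeSubmodule (d : ℕ) : Submodule ℤ (Fin d → ℝ) :=
  Submodule.span ℤ {x : Fin d → ℝ | IsLatticePt x}

/-- A set of vectors forms a `ℤ`-basis of the lattice `ℤ^d`:
it is `ℝ`-linearly independent and `ℤ`-spans the lattice. -/
def IsLatticeBasisSet {d : ℕ} (S : Set (Fin d → ℝ)) : Prop :=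
  LinearIndependent ℝ (fun v : S => (v : Fin d → ℝ)) ∧
    Submodule.span ℤ S = latticeSubmodule d

/-- A smooth Fano polytope: full-dimensional lattice polytope with `0` in its
interior, such that the vertex set of every facet is a `ℤ`-basis of `ℤ^d`. -/
def IsSmoothFano {d : ℕ} (P : Set (Fin d → ℝ)) : Prop :=
  IsLatticePolytope P ∧ (0 : Fin d → ℝ) ∈ interior P ∧ fdim P = d ∧
    ∀ F, IsFacet P F → IsLatticeBasisSet (Set.extremePoints ℝ F)

/-- A reflexive polytope: full-dimensional lattice polytope with `0` in its
interior whose polar dual is again a lattice polytope. -/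
def IsReflexive {d : ℕ} (P : Set (Fin d → ℝ)) : Prop :=
  IsLatticePolytope P ∧ fdim P = d ∧ (0 : Fin d → ℝ) ∈ interior P ∧
    IsLatticePolytope (polarDual P)

/-- Free sum `P ⊕ Q = conv((P × {0}) ∪ ({0} × Q))`. -/
def freeSum {a b : ℕ} (P : Set (Fin a → ℝ)) (Q : Set (Fin b → ℝ)) :
    Set (Fin (a + b) → ℝ) :=
  convexHull ℝ ((fun v => Fin.append v (0 : Fin b → ℝ)) '' P ∪
    (fun w => Fin.append (0 : Fin a → ℝ) w) '' Q)

/-- Product `P × Q = {(x,y) | x ∈ P, y ∈ Q}`. -/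
def prodPoly {a b : ℕ} (P : Set (Fin a → ℝ)) (Q : Set (Fin b → ℝ)) :
    Set (Fin (a + b) → ℝ) :=
  {z | ∃ x ∈ P, ∃ y ∈ Q, z = Fin.append x y}

/-- Lattice equivalence: `Q = A · P` with `A ∈ GL_d(ℤ)`. -/
def LatticeEquiv {d : ℕ} (P Q : Set (Fin d → ℝ)) : Prop :=
  ∃ A : Matrix (Fin d) (Fin d) ℤ, IsUnit A.det ∧
    Q = (fun x => (A.map (Int.cast : ℤ → ℝ)).mulVec x) '' P

/-- Affine unimodular equivalence: `Q = A · P + t` with `A ∈ GL_d(ℤ)`, `t ∈ ℤ^d`. -/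
def AffineLatticeEquiv {d : ℕ} (P Q : Set (Fin d → ℝ)) : Prop :=
  ∃ (A : Matrix (Fin d) (Fin d) ℤ) (t : Fin d → ℤ), IsUnit A.det ∧
    Q = (fun x => (A.map (Int.cast : ℤ → ℝ)).mulVec x + fun i => (t i : ℝ)) '' P

/-- Combinatorial isomorphism: an inclusion-preserving bijection of face lattices. -/
def CombIso {n : ℕ} (P Q : Set (Fin n → ℝ)) : Prop :=
  ∃ φ : {F : Set (Fin n → ℝ) // IsFace P F} ≃ {F : Set (Fin n → ℝ) // IsFace Q F},
    ∀ F G, F.1 ⊆ G.1 ↔ (φ F).1 ⊆ (φ G).1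

lemma dotp_add_left {d : ℕ} (a b x : Fin d → ℝ) :
    dotp (a + b) x = dotp a x + dotp b x := by
  simp [dotp, add_mul, Finset.sum_add_distrib]

lemma dotp_smul_left {d : ℕ} (c : ℝ) (a x : Fin d → ℝ) :
    dotp (c • a) x = c * dotp a x := by
  simp [dotp, Finset.mul_sum, mul_assoc]

lemma isLinearMap_dotp_right {d : ℕ} (v : Fin d → ℝ) :
    IsLinearMap ℝ (fun x : Fin d → ℝ => dotp v x) := by
  constructor
  · intro a b; simp [dotp, mul_add, Finset.sum_add_distrib]
  · intro c a
    simp only [dotp, Pi.smul_apply, smul_eq_mul, Finset.mul_sum]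
    exact Finset.sum_congr rfl fun i _ => by ring

lemma continuous_dotp_left {d : ℕ} (x : Fin d → ℝ) :
    Continuous (fun v : Fin d → ℝ => dotp v x) := by
  unfold dotp
  exact continuous_finset_sum _ fun i _ => (continuous_apply i).mul continuous_const

lemma dotp_single {d : ℕ} (v : Fin d → ℝ) (i : Fin d) (a : ℝ) :
    dotp v (Pi.single i a) = v i * a := by
  unfold dotp
  rw [Finset.sum_eq_single i]
  · simp
  · intro j _ hj; simp [Pi.single_apply, hj]
  · simp


/-- The polar dual of a polytope with `0` in its interior is again a polytope
with `0` in its interior. -/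
theorem stmt1 {d : ℕ} (P : Set (Fin d → ℝ)) (hP : IsPolytope P)
    (h0 : (0 : Fin d → ℝ) ∈ interior P) :
    IsPolytope (polarDual P) ∧ (0 : Fin d → ℝ) ∈ interior (polarDual P) := by
  obtain ⟨V, rfl⟩ := hP
  set P : Set (Fin d → ℝ) := convexHull ℝ (V : Set (Fin d → ℝ)) with hPdef
  set D : Set (Fin d → ℝ) := polarDual P with hDdef
  have hVP : (V : Set (Fin d → ℝ)) ⊆ P := subset_convexHull ℝ _
  -- membership criterion: enough to test on V
  have hmemD : ∀ v : Fin d → ℝ, (∀ x ∈ V, dotp v x ≤ 1) → v ∈ D := by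
    intro v hv x hx
    have hconv : Convex ℝ {x : Fin d → ℝ | dotp v x ≤ 1} :=
      convex_halfSpace_le (isLinearMap_dotp_right v) 1
    exact convexHull_min (fun y hy => hv y hy) hconv hx
  -- D is convex
  have hDconv : Convex ℝ D := by
    intro a ha b hb s t hs ht hst
    apply hmemD
    intro x hx
    have := (isLinearMap_dotp_right (s • a + t • b)).mk'
    have h1 : dotp (s • a + t • b) x = s * dotp a x + t * dotp b x := by
      rw [dotp_add_left, dotp_smul_left, dotp_smul_left]
    rw [h1]
    calc s * dotp a x + t * dotp b x ≤ s * 1 + t * 1 := by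
          gcongr
          · exact ha x (hVP hx)
          · exact hb x (hVP hx)
      _ = 1 := by linarith
  -- D is closed
  have hDclosed : IsClosed D := by
    have : D = ⋂ x ∈ P, {v : Fin d → ℝ | dotp v x ≤ 1} := by
      ext v; simp [hDdef, polarDual]
    rw [this]
    exact isClosed_biInter fun x _ => isClosed_le (continuous_dotp_left x) continuous_const
  -- D is bounded
  obtain ⟨ε, hε, hball⟩ : ∃ ε > 0, Metric.ball (0 : Fin d → ℝ) ε ⊆ P := by
    rw [mem_interior_iff_mem_nhds, Metric.mem_nhds_iff] at h0
    exact h0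
  have hDbdd : Bornology.IsBounded D := by
    apply Bornology.IsBounded.subset (Metric.isBounded_closedBall (x := (0 : Fin d → ℝ)) (r := 2 / ε))
    intro v hv
    rw [Metric.mem_closedBall, dist_zero_right]
    rw [pi_norm_le_iff_of_nonneg (by positivity)]
    intro i
    have key : ∀ a : ℝ, |a| = 1 → v i * a ≤ 2 / ε := by
      intro a ha
      set x : Fin d → ℝ := Pi.single i ((ε / 2) * a) with hxdef
      have hx : x ∈ Metric.ball (0 : Fin d → ℝ) ε := by
        rw [Metric.mem_ball, dist_zero_right]
        have : ‖x‖ ≤ ε / 2 := by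
          rw [pi_norm_le_iff_of_nonneg (by positivity)]
          intro j
          rcases eq_or_ne j i with rfl | hj
          · simp [hxdef, Real.norm_eq_abs, abs_mul, abs_of_pos hε, ha,
              abs_of_nonneg hε.le]
          · simp only [hxdef, Pi.single_apply, hj, if_false, norm_zero]
            positivity
        linarith
      have hle := hv _ (hball hx)
      rw [hxdef, dotp_single] at hle
      have h2 : v i * a * (ε / 2) ≤ 1 := by linarith
      rw [le_div_iff₀ hε]
      nlinarith
    have h1 := key 1 (by norm_num)
    have h2 := key (-1) (by norm_num)
    rw [Real.norm_eq_abs, abs_le]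
    constructor <;> nlinarith
  have hDcomp : IsCompact D := Metric.isCompact_of_isClosed_isBounded hDclosed hDbdd
  -- extreme points are finite
  have hEfin : (Set.extremePoints ℝ D).Finite := by
    set T : (Fin d → ℝ) → Set (Fin d → ℝ) := fun v => {x | x ∈ (V : Set (Fin d → ℝ)) ∧ dotp v x = 1} with hT
    have himg : (T '' Set.extremePoints ℝ D).Finite :=
      Set.Finite.subset (V.finite_toSet.finite_subsets) (by
        rintro _ ⟨v, _, rfl⟩; exact fun x hx => hx.1)
    apply Set.Finite.of_finite_image himg
    -- injectivity of T on extreme points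
    intro v hv w hw hTvw
    by_contra hne
    obtain ⟨hvD, hvext⟩ := mem_extremePoints.mp hv
    have hwD : w ∈ D := (mem_extremePoints.mp hw).1
    -- every x in V \ T v has dotp v x < 1
    have hlt : ∀ x ∈ V, x ∉ T v → dotp v x < 1 := by
      intro x hx hxT
      rcases lt_or_eq_of_le (hvD x (hVP hx)) with h | h
      · exact h
      · exact absurd ⟨hx, h⟩ hxT
    -- dotp w x = 1 on T v
    have hwT : ∀ x ∈ T v, dotp w x = 1 := by
      intro x hx
      rw [hTvw] at hx
      exact hx.2
    -- find small t > 0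
    have hev : ∀ᶠ t : ℝ in nhds 0, ∀ x ∈ V, x ∉ T v → dotp (v + t • (v - w)) x < 1 := by
      have : ∀ x ∈ V, x ∉ T v → ∀ᶠ t : ℝ in nhds 0, dotp (v + t • (v - w)) x < 1 := by
        intro x hx hxT
        have hc : Continuous (fun t : ℝ => dotp (v + t • (v - w)) x) := by
          have : (fun t : ℝ => dotp (v + t • (v - w)) x)
              = fun t : ℝ => dotp v x + t * dotp (v - w) x := by
            funext t
            rw [dotp_add_left, dotp_smul_left]
          rw [this]
          exact continuous_const.add (continuous_id.mul continuous_const)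
        have h0' : dotp (v + (0:ℝ) • (v - w)) x < 1 := by
          simpa [dotp_add_left, dotp_smul_left] using hlt x hx hxT
        exact hc.continuousAt.eventually_lt continuousAt_const h0'
      rw [show (∀ x ∈ V, x ∉ T v → ∀ᶠ t : ℝ in nhds 0, dotp (v + t • (v - w)) x < 1)
            ↔ ∀ x ∈ V, ∀ᶠ t : ℝ in nhds 0, x ∉ T v → dotp (v + t • (v - w)) x < 1 from
          forall₂_congr fun x hx => by
            by_cases hxT : x ∈ T v
            · simp [hxT]
            · simp [hxT]] at this
      exact (Filter.eventually_all_finset V).mpr this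
    obtain ⟨t, hts, ht0⟩ := ((hev.filter_mono nhdsWithin_le_nhds).and
      (eventually_mem_nhdsWithin : ∀ᶠ t in nhdsWithin (0:ℝ) (Set.Ioi 0), t ∈ Set.Ioi 0)).exists
    rw [Set.mem_Ioi] at ht0
    set w' : Fin d → ℝ := v + t • (v - w) with hw'
    have hw'D : w' ∈ D := by
      apply hmemD
      intro x hx
      by_cases hxT : x ∈ T v
      · have h1 : dotp v x = 1 := hxT.2
        have h2 : dotp w x = 1 := hwT x hxT
        rw [hw', dotp_add_left, dotp_smul_left]
        have : dotp (v - w) x = dotp v x - dotp w x := by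
          have := dotp_add_left (v - w) w x
          simp at this
          linarith
        rw [this, h1, h2]
        norm_num
      · exact le_of_lt (hts x hx hxT)
    have hseg : v ∈ openSegment ℝ w w' := by
      refine ⟨t / (1 + t), 1 / (1 + t), by positivity, by positivity, ?_, ?_⟩
      · field_simp
        linarith
      · funext i
        simp only [hw', Pi.add_apply, Pi.smul_apply, Pi.sub_apply, smul_eq_mul]
        field_simp
        ring
    exact hne ((hvext w hwD w' hw'D hseg).1).symm
  -- conclude D is a polytope
  have hKM : convexHull ℝ (Set.extremePoints ℝ D) = D := by
    have h1 := closure_convexHull_extremePoints hDcomp hDconv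
    rwa [IsClosed.closure_eq ((hEfin.isCompact_convexHull (𝕜 := ℝ)).isClosed)] at h1
  constructor
  · exact ⟨hEfin.toFinset, by rw [hEfin.coe_toFinset, hKM]⟩
  -- 0 in interior of D
  · obtain ⟨R, hRV⟩ := V.finite_toSet.isBounded.subset_closedBall 0
    set R' : ℝ := max R 0 with hR'
    have hR'0 : 0 ≤ R' := le_max_right _ _
    have hPR : P ⊆ Metric.closedBall 0 R' := by
      apply convexHull_min _ (convex_closedBall _ _)
      intro x hx
      exact Metric.closedBall_subset_closedBall (le_max_left _ _) (hRV hx)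
    set r : ℝ := 1 / (d * R' + 1) with hr
    have hrpos : 0 < r := by positivity
    rw [mem_interior_iff_mem_nhds, Metric.mem_nhds_iff]
    refine ⟨r, hrpos, ?_⟩
    intro v hv
    rw [Metric.mem_ball, dist_zero_right] at hv
    intro x hx
    have hxR : ∀ i, |x i| ≤ R' := by
      intro i
      have := norm_le_pi_norm x i
      have h2 : ‖x‖ ≤ R' := by
        have := hPR hx
        rwa [Metric.mem_closedBall, dist_zero_right] at this
      simpa [Real.norm_eq_abs] using this.trans h2
    have hvb : ∀ i, |v i| ≤ ‖v‖ := fun i => by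
      simpa [Real.norm_eq_abs] using norm_le_pi_norm v i
    have hsum : dotp v x ≤ d * (‖v‖ * R') := by
      unfold dotp
      calc ∑ i, v i * x i ≤ ∑ i : Fin d, ‖v‖ * R' := by
            apply Finset.sum_le_sum
            intro i _
            calc v i * x i ≤ |v i * x i| := le_abs_self _
              _ = |v i| * |x i| := abs_mul _ _
              _ ≤ ‖v‖ * R' := by
                  apply mul_le_mul (hvb i) (hxR i) (abs_nonneg _)
                  exact (abs_nonneg _).trans (hvb i)
        _ = d * (‖v‖ * R') := by simp [mul_comm]
    have hlt : (d : ℝ) * (‖v‖ * R') < 1 := by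
      have h1 : ‖v‖ * R' ≤ r * R' := by
        apply mul_le_mul_of_nonneg_right hv.le hR'0
      have h2 : (d : ℝ) * (r * R') = d * R' / (d * R' + 1) := by
        rw [hr]; field_simp
      have h3 : (d : ℝ) * R' / (d * R' + 1) < 1 := by
        rw [div_lt_one (by positivity)]
        linarith
      calc (d : ℝ) * (‖v‖ * R') ≤ d * (r * R') := by
            apply mul_le_mul_of_nonneg_left h1 (Nat.cast_nonneg d)
        _ < 1 := by linarith [h2, h3]
    linarith
end
end

section
/- If P ⊆ ℝ^a and Q ⊆ ℝ^b are reflexive lattice polytopes, then their free sum P ⊕ Q ⊆ ℝ^{a+b} is a reflexive lattice polytope. -/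
open Set

noncomputable section

namespace Stmt9Aux

variable {a b : ℕ}

lemma isLinearMap_left (a b : ℕ) :
    IsLinearMap ℝ (fun v : Fin a → ℝ => Fin.append v (0 : Fin b → ℝ)) := by
  constructor
  · intro x y
    funext i
    refine Fin.addCases (fun j => ?_) (fun j => ?_) i <;>
      simp [Fin.append_left, Fin.append_right]
  · intro c x
    funext i
    refine Fin.addCases (fun j => ?_) (fun j => ?_) i <;>
      simp [Fin.append_left, Fin.append_right]

lemma isLinearMap_right (a b : ℕ) :
    IsLinearMap ℝ (fun w : Fin b → ℝ => Fin.append (0 : Fin a → ℝ) w) := by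
  constructor
  · intro x y
    funext i
    refine Fin.addCases (fun j => ?_) (fun j => ?_) i <;>
      simp [Fin.append_left, Fin.append_right]
  · intro c x
    funext i
    refine Fin.addCases (fun j => ?_) (fun j => ?_) i <;>
      simp [Fin.append_left, Fin.append_right]

lemma isLinearMap_pair (a b : ℕ) :
    IsLinearMap ℝ (fun p : (Fin a → ℝ) × (Fin b → ℝ) => Fin.append p.1 p.2) := by
  constructor
  · intro x y
    funext i
    refine Fin.addCases (fun j => ?_) (fun j => ?_) i <;>
      simp [Fin.append_left, Fin.append_right]
  · intro c x
    funext i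
    refine Fin.addCases (fun j => ?_) (fun j => ?_) i <;>
      simp [Fin.append_left, Fin.append_right]

lemma isLinearMap_dotp {d : ℕ} (v : Fin d → ℝ) : IsLinearMap ℝ (dotp v) := by
  constructor
  · intro x y
    simp [dotp, mul_add, Finset.sum_add_distrib]
  · intro c x
    simp [dotp, Finset.mul_sum]
    ring_nf
    congr 1
    funext i
    ring

lemma dotp_append (u : Fin a → ℝ) (w : Fin b → ℝ) (x : Fin a → ℝ) (y : Fin b → ℝ) :
    dotp (Fin.append u w) (Fin.append x y) = dotp u x + dotp w y := by
  simp [dotp, Fin.sum_univ_add, Fin.append_left, Fin.append_right]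

lemma dotp_zero_right {d : ℕ} (v : Fin d → ℝ) : dotp v 0 = 0 := by
  simp [dotp]

lemma isLatticePt_append {x : Fin a → ℝ} {y : Fin b → ℝ}
    (hx : IsLatticePt x) (hy : IsLatticePt y) : IsLatticePt (Fin.append x y) := by
  intro i
  refine Fin.addCases (fun j => ?_) (fun j => ?_) i
  · rw [Fin.append_left]; exact hx j
  · rw [Fin.append_right]; exact hy j

lemma append_eq_self (z : Fin (a + b) → ℝ) :
    Fin.append (fun i => z (Fin.castAdd b i)) (fun i => z (Fin.natAdd a i)) = z :=
  Fin.append_castAdd_natAdd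

lemma prodPoly_eq_image (P : Set (Fin a → ℝ)) (Q : Set (Fin b → ℝ)) :
    prodPoly P Q = (fun p : (Fin a → ℝ) × (Fin b → ℝ) => Fin.append p.1 p.2) '' (P ×ˢ Q) := by
  ext z
  constructor
  · rintro ⟨x, hx, y, hy, rfl⟩
    exact ⟨(x, y), ⟨hx, hy⟩, rfl⟩
  · rintro ⟨⟨x, y⟩, ⟨hx, hy⟩, rfl⟩
    exact ⟨x, hx, y, hy, rfl⟩

lemma isLatticePolytope_prodPoly {P : Set (Fin a → ℝ)} {Q : Set (Fin b → ℝ)}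
    (hP : IsLatticePolytope P) (hQ : IsLatticePolytope Q) :
    IsLatticePolytope (prodPoly P Q) := by
  classical
  obtain ⟨V, hV, rfl⟩ := hP
  obtain ⟨W, hW, rfl⟩ := hQ
  refine ⟨(V ×ˢ W).image (fun p => Fin.append p.1 p.2), ?_, ?_⟩
  · intro z hz
    simp only [Finset.mem_image, Finset.mem_product] at hz
    obtain ⟨⟨x, y⟩, ⟨hx, hy⟩, rfl⟩ := hz
    exact isLatticePt_append (hV x hx) (hW y hy)
  · rw [prodPoly_eq_image, ← convexHull_prod, (isLinearMap_pair a b).image_convexHull,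
      Finset.coe_image, Finset.coe_product]

lemma polarDual_freeSum (P : Set (Fin a → ℝ)) (Q : Set (Fin b → ℝ)) :
    polarDual (freeSum P Q) = prodPoly (polarDual P) (polarDual Q) := by
  ext v
  have hv := (append_eq_self v).symm
  constructor
  · intro h
    refine ⟨fun i => v (Fin.castAdd b i), ?_, fun i => v (Fin.natAdd a i), ?_, hv⟩
    · intro x hx
      have h1 : Fin.append x (0 : Fin b → ℝ) ∈ freeSum P Q :=
        subset_convexHull ℝ _ (Or.inl ⟨x, hx, rfl⟩)
      have h2 := h _ h1
      rw [hv, dotp_append, dotp_zero_right, add_zero] at h2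
      exact h2
    · intro y hy
      have h1 : Fin.append (0 : Fin a → ℝ) y ∈ freeSum P Q :=
        subset_convexHull ℝ _ (Or.inr ⟨y, hy, rfl⟩)
      have h2 := h _ h1
      rw [hv, dotp_append, dotp_zero_right, zero_add] at h2
      exact h2
  · rintro ⟨v1, hv1, v2, hv2, rfl⟩
    intro z hz
    have hconv : Convex ℝ {z : Fin (a + b) → ℝ | dotp (Fin.append v1 v2) z ≤ 1} :=
      convex_halfSpace_le (isLinearMap_dotp _) 1
    refine convexHull_min ?_ hconv hz
    rintro w (⟨x, hx, rfl⟩ | ⟨y, hy, rfl⟩)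
    · show dotp (Fin.append v1 v2) (Fin.append x 0) ≤ 1
      rw [dotp_append, dotp_zero_right, add_zero]
      exact hv1 x hx
    · show dotp (Fin.append v1 v2) (Fin.append 0 y) ≤ 1
      rw [dotp_append, dotp_zero_right, zero_add]
      exact hv2 y hy

lemma isLatticePolytope_freeSum {P : Set (Fin a → ℝ)} {Q : Set (Fin b → ℝ)}
    (hP : IsLatticePolytope P) (hQ : IsLatticePolytope Q) :
    IsLatticePolytope (freeSum P Q) := by
  classical
  obtain ⟨V, hV, rfl⟩ := hP
  obtain ⟨W, hW, rfl⟩ := hQ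
  refine ⟨V.image (fun v => Fin.append v (0 : Fin b → ℝ)) ∪
      W.image (fun w => Fin.append (0 : Fin a → ℝ) w), ?_, ?_⟩
  · intro z hz
    simp only [Finset.mem_union, Finset.mem_image] at hz
    have h0a : IsLatticePt (0 : Fin a → ℝ) := fun i => ⟨0, by simp⟩
    have h0b : IsLatticePt (0 : Fin b → ℝ) := fun i => ⟨0, by simp⟩
    rcases hz with ⟨x, hx, rfl⟩ | ⟨y, hy, rfl⟩
    · exact isLatticePt_append (hV x hx) h0b
    · exact isLatticePt_append h0a (hW y hy)
  · unfold freeSum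
    rw [(isLinearMap_left a b).image_convexHull, (isLinearMap_right a b).image_convexHull,
      convexHull_convexHull_union_left, convexHull_convexHull_union_right]
    congr 1
    push_cast
    rfl

lemma vectorSpan_le_span {n : ℕ} (s : Set (Fin n → ℝ)) :
    vectorSpan ℝ s ≤ Submodule.span ℝ s := by
  rw [vectorSpan_def, Submodule.span_le]
  rintro x hx
  rw [Set.mem_vsub] at hx
  obtain ⟨p, hp, q, hq, rfl⟩ := hx
  rw [vsub_eq_sub]
  exact sub_mem (Submodule.subset_span hp) (Submodule.subset_span hq)

lemma span_le_vectorSpan {n : ℕ} {s : Set (Fin n → ℝ)} (h0 : (0 : Fin n → ℝ) ∈ s) :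
    Submodule.span ℝ s ≤ vectorSpan ℝ s := by
  rw [Submodule.span_le]
  intro x hx
  have h1 : x -ᵥ (0 : Fin n → ℝ) ∈ s -ᵥ s := Set.vsub_mem_vsub hx h0
  rw [vsub_eq_sub, sub_zero] at h1
  rw [vectorSpan_def]
  exact Submodule.subset_span h1

lemma span_eq_top_of_reflexive {n : ℕ} {s : Set (Fin n → ℝ)}
    (hd : fdim s = n) : Submodule.span ℝ s = ⊤ := by
  have h1 : vectorSpan ℝ s = ⊤ := by
    apply Submodule.eq_top_of_finrank_eq
    rw [← fdim, hd]
    simp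
  exact top_le_iff.mp (h1 ▸ vectorSpan_le_span s)

lemma fdim_freeSum {P : Set (Fin a → ℝ)} {Q : Set (Fin b → ℝ)}
    (hP0 : (0 : Fin a → ℝ) ∈ P) (hQ0 : (0 : Fin b → ℝ) ∈ Q)
    (hPd : fdim P = a) (hQd : fdim Q = b) : fdim (freeSum P Q) = a + b := by
  have h0 : (0 : Fin (a + b) → ℝ) ∈ freeSum P Q := by
    refine subset_convexHull ℝ _ (Or.inl ⟨0, hP0, ?_⟩)
    funext i
    refine Fin.addCases (fun j => ?_) (fun j => ?_) i <;>
      simp [Fin.append_left, Fin.append_right]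
  have hsP := span_eq_top_of_reflexive hPd
  have hsQ := span_eq_top_of_reflexive hQd
  have hspan : Submodule.span ℝ (freeSum P Q) = ⊤ := by
    rw [eq_top_iff]
    intro z _
    have hz1 : (fun i => z (Fin.castAdd b i)) ∈ Submodule.span ℝ P := by
      rw [hsP]; trivial
    have hz2 : (fun i => z (Fin.natAdd a i)) ∈ Submodule.span ℝ Q := by
      rw [hsQ]; trivial
    have hm1 : Fin.append (fun i => z (Fin.castAdd b i)) (0 : Fin b → ℝ) ∈
        Submodule.span ℝ (freeSum P Q) := by
      have himg : (fun v : Fin a → ℝ => Fin.append v (0 : Fin b → ℝ)) '' P ⊆ freeSum P Q :=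
        (Set.subset_union_left).trans (subset_convexHull ℝ _)
      have h2 : ((isLinearMap_left a b).mk' _) (fun i => z (Fin.castAdd b i)) ∈
          Submodule.map ((isLinearMap_left a b).mk' _) (Submodule.span ℝ P) :=
        Submodule.mem_map_of_mem hz1
      rw [Submodule.map_span] at h2
      exact Submodule.span_mono himg h2
    have hm2 : Fin.append (0 : Fin a → ℝ) (fun i => z (Fin.natAdd a i)) ∈
        Submodule.span ℝ (freeSum P Q) := by
      have himg : (fun w : Fin b → ℝ => Fin.append (0 : Fin a → ℝ) w) '' Q ⊆ freeSum P Q :=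
        (Set.subset_union_right).trans (subset_convexHull ℝ _)
      have h2 : ((isLinearMap_right a b).mk' _) (fun i => z (Fin.natAdd a i)) ∈
          Submodule.map ((isLinearMap_right a b).mk' _) (Submodule.span ℝ Q) :=
        Submodule.mem_map_of_mem hz2
      rw [Submodule.map_span] at h2
      exact Submodule.span_mono himg h2
    have hzeq : z = Fin.append (fun i => z (Fin.castAdd b i)) (0 : Fin b → ℝ) +
        Fin.append (0 : Fin a → ℝ) (fun i => z (Fin.natAdd a i)) := by
      funext i
      refine Fin.addCases (fun j => ?_) (fun j => ?_) i <;>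
        simp [Fin.append_left, Fin.append_right]
    rw [hzeq]
    exact Submodule.add_mem _ hm1 hm2
  have hvs : vectorSpan ℝ (freeSum P Q) = ⊤ :=
    top_le_iff.mp (hspan ▸ span_le_vectorSpan h0)
  rw [fdim, hvs]
  simp

lemma zero_mem_interior_freeSum {P : Set (Fin a → ℝ)} {Q : Set (Fin b → ℝ)}
    (hP : (0 : Fin a → ℝ) ∈ interior P) (hQ : (0 : Fin b → ℝ) ∈ interior Q) :
    (0 : Fin (a + b) → ℝ) ∈ interior (freeSum P Q) := by
  rw [mem_interior_iff_mem_nhds, Metric.mem_nhds_iff] at hP hQ ⊢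
  obtain ⟨ε1, hε1, hb1⟩ := hP
  obtain ⟨ε2, hε2, hb2⟩ := hQ
  refine ⟨min ε1 ε2 / 2, by positivity, ?_⟩
  intro z hz
  rw [Metric.mem_ball, dist_zero_right] at hz
  set x : Fin a → ℝ := fun i => z (Fin.castAdd b i) with hxdef
  set y : Fin b → ℝ := fun i => z (Fin.natAdd a i) with hydef
  have hxn : ‖x‖ ≤ ‖z‖ := by
    refine pi_norm_le_iff_of_nonneg (norm_nonneg z) |>.2 fun i => ?_
    exact norm_le_pi_norm z (Fin.castAdd b i)
  have hyn : ‖y‖ ≤ ‖z‖ := by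
    refine pi_norm_le_iff_of_nonneg (norm_nonneg z) |>.2 fun i => ?_
    exact norm_le_pi_norm z (Fin.natAdd a i)
  have hx2 : (2 : ℝ) • x ∈ P := by
    apply hb1
    rw [Metric.mem_ball, dist_zero_right, norm_smul]
    have : ‖(2 : ℝ)‖ * ‖x‖ ≤ 2 * ‖z‖ := by
      rw [Real.norm_ofNat]
      nlinarith [norm_nonneg x]
    calc ‖(2 : ℝ)‖ * ‖x‖ ≤ 2 * ‖z‖ := this
      _ < 2 * (min ε1 ε2 / 2) := by linarith
      _ = min ε1 ε2 := by ring
      _ ≤ ε1 := min_le_left _ _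
  have hy2 : (2 : ℝ) • y ∈ Q := by
    apply hb2
    rw [Metric.mem_ball, dist_zero_right, norm_smul]
    have : ‖(2 : ℝ)‖ * ‖y‖ ≤ 2 * ‖z‖ := by
      rw [Real.norm_ofNat]
      nlinarith [norm_nonneg y]
    calc ‖(2 : ℝ)‖ * ‖y‖ ≤ 2 * ‖z‖ := this
      _ < 2 * (min ε1 ε2 / 2) := by linarith
      _ = min ε1 ε2 := by ring
      _ ≤ ε2 := min_le_right _ _
  have hmem1 : Fin.append ((2 : ℝ) • x) (0 : Fin b → ℝ) ∈ freeSum P Q :=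
    subset_convexHull ℝ _ (Or.inl ⟨_, hx2, rfl⟩)
  have hmem2 : Fin.append (0 : Fin a → ℝ) ((2 : ℝ) • y) ∈ freeSum P Q :=
    subset_convexHull ℝ _ (Or.inr ⟨_, hy2, rfl⟩)
  have hcomb := (convex_convexHull ℝ _) hmem1 hmem2
    (by norm_num : (0:ℝ) ≤ 1/2) (by norm_num : (0:ℝ) ≤ 1/2) (by norm_num)
  have hzeq : z = (1/2 : ℝ) • Fin.append ((2 : ℝ) • x) (0 : Fin b → ℝ) +
      (1/2 : ℝ) • Fin.append (0 : Fin a → ℝ) ((2 : ℝ) • y) := by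
    funext i
    refine Fin.addCases (fun j => ?_) (fun j => ?_) i <;>
      simp [Fin.append_left, Fin.append_right, hxdef, hydef] <;> ring
  rw [hzeq]
  exact hcomb

end Stmt9Aux

open Stmt9Aux in
/-- The free sum of reflexive polytopes is reflexive. -/
theorem stmt9 {a b : ℕ} (P : Set (Fin a → ℝ)) (Q : Set (Fin b → ℝ))
    (hP : IsReflexive P) (hQ : IsReflexive Q) :
    IsReflexive (freeSum P Q) := by
  obtain ⟨hPl, hPd, hP0, hPdual⟩ := hP
  obtain ⟨hQl, hQd, hQ0, hQdual⟩ := hQ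
  refine ⟨isLatticePolytope_freeSum hPl hQl,
    fdim_freeSum (interior_subset hP0) (interior_subset hQ0) hPd hQd,
    zero_mem_interior_freeSum hP0 hQ0, ?_⟩
  rw [polarDual_freeSum]
  exact isLatticePolytope_prodPoly hPdual hQdual
end
end

section
/- Let P ⊆ ℝ^d be a smooth Fano polytope and v a vertex of P, with v̄ = (v,0) ∈ ℝ^{d+1}. Then the smooth skew bipyramid sbip(P,v) := conv((P × {0}) ∪ {−e_{d+1}, v̄ + e_{d+1}}) is again a smooth Fano polytope. -/
open Set

noncomputable section

-- toolkit
/-- `x ↦ snoc x 0` as a linear map. -/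
def sl (d : ℕ) : (Fin d → ℝ) →ₗ[ℝ] (Fin (d+1) → ℝ) where
  toFun x := Fin.snoc x 0
  map_add' x y := by
    funext i
    refine Fin.lastCases ?_ (fun j => ?_) i <;> simp
  map_smul' c x := by
    funext i
    refine Fin.lastCases ?_ (fun j => ?_) i <;> simp

@[simp] lemma sl_apply {d : ℕ} (x : Fin d → ℝ) : sl d x = Fin.snoc x 0 := rfl

lemma sl_inj {d : ℕ} : Function.Injective (sl d) := by
  intro x y h
  have := congrArg Fin.init h
  simpa [Fin.init_snoc] using this

@[simp] lemma sl_last {d : ℕ} (x : Fin d → ℝ) : sl d x (Fin.last d) = 0 := by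
  simp [sl]

/-- `init` as a linear map. -/
def pr (d : ℕ) : (Fin (d+1) → ℝ) →ₗ[ℝ] (Fin d → ℝ) where
  toFun x := Fin.init x
  map_add' x y := rfl
  map_smul' c x := rfl

@[simp] lemma pr_apply {d : ℕ} (x : Fin (d+1) → ℝ) : pr d x = Fin.init x := rfl

@[simp] lemma pr_sl {d : ℕ} (x : Fin d → ℝ) : pr d (sl d x) = x := by
  rw [pr_apply, sl_apply, Fin.init_snoc]

/-- `dotp c` as a linear map. -/
def dlin {d : ℕ} (c : Fin d → ℝ) : (Fin d → ℝ) →ₗ[ℝ] ℝ where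
  toFun x := dotp c x
  map_add' x y := by simp [dotp, mul_add, Finset.sum_add_distrib]
  map_smul' a x := by
    simp only [dotp, Pi.smul_apply, smul_eq_mul, RingHom.id_apply, Finset.mul_sum]
    exact Finset.sum_congr rfl fun i _ => by ring

@[simp] lemma dlin_apply {d : ℕ} (c x : Fin d → ℝ) : dlin c x = dotp c x := rfl

lemma dotp_add_right {d : ℕ} (c x y : Fin d → ℝ) :
    dotp c (x + y) = dotp c x + dotp c y := (dlin c).map_add x y

lemma dotp_smul_right {d : ℕ} (c : Fin d → ℝ) (a : ℝ) (x : Fin d → ℝ) :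
    dotp c (a • x) = a * dotp c x := (dlin c).map_smul a x

lemma dotp_self_nonneg {d : ℕ} (c : Fin d → ℝ) : 0 ≤ dotp c c :=
  Finset.sum_nonneg fun i _ => mul_self_nonneg _

lemma eq_zero_of_dotp_self {d : ℕ} {c : Fin d → ℝ} (h : dotp c c = 0) : c = 0 := by
  funext i
  have h0 : ∀ j ∈ Finset.univ, (0:ℝ) ≤ c j * c j := fun j _ => mul_self_nonneg _
  have := (Finset.sum_eq_zero_iff_of_nonneg h0).1 h i (Finset.mem_univ i)
  simpa [mul_self_eq_zero] using this

lemma dotp_snoc {d : ℕ} (c : Fin (d+1) → ℝ) (y : Fin d → ℝ) (t : ℝ) :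
    dotp c (Fin.snoc y t) = dotp (Fin.init c) y + c (Fin.last d) * t := by
  simp [dotp, Fin.sum_univ_castSucc, Fin.init]

lemma snoc_eq_self {d : ℕ} (x : Fin (d+1) → ℝ) :
    Fin.snoc (Fin.init x) (x (Fin.last d)) = x := Fin.snoc_init_self x

-- lattice submodule
def latt (d : ℕ) : Submodule ℤ (Fin d → ℝ) where
  carrier := {x | IsLatticePt x}
  add_mem' := by
    rintro x y hx hy i
    obtain ⟨n, hn⟩ := hx i; obtain ⟨m, hm⟩ := hy i
    exact ⟨n + m, by simp [hn, hm]⟩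
  zero_mem' := fun i => ⟨0, by simp⟩
  smul_mem' := by
    rintro z x hx i
    obtain ⟨n, hn⟩ := hx i
    exact ⟨z * n, by simp [hn, zsmul_eq_mul]⟩

lemma latticeSubmodule_eq (d : ℕ) : latticeSubmodule d = latt d := by
  have : {x : Fin d → ℝ | IsLatticePt x} = (latt d : Set (Fin d → ℝ)) := rfl
  rw [latticeSubmodule, this, Submodule.span_eq]

lemma mem_latticeSubmodule {d : ℕ} {x : Fin d → ℝ} :
    x ∈ latticeSubmodule d ↔ IsLatticePt x := by
  rw [latticeSubmodule_eq]; rfl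

lemma isLatticePt_snoc {d : ℕ} {x : Fin d → ℝ} (hx : IsLatticePt x) {t : ℝ}
    (ht : ∃ n : ℤ, t = (n : ℝ)) : IsLatticePt (Fin.snoc x t : Fin (d+1) → ℝ) := by
  intro i
  refine Fin.lastCases ?_ (fun j => ?_) i
  · simpa using ht
  · simpa using hx j

/-- Extending a lattice basis of `ℤ^d` by an apex `snoc u σ`, `σ = ±1`. -/
lemma basis_extend {d : ℕ} {B : Set (Fin d → ℝ)} (hB : IsLatticeBasisSet B)
    {u : Fin d → ℝ} (hu : IsLatticePt u) {σ : ℝ} (hσ : σ = 1 ∨ σ = -1) :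
    IsLatticeBasisSet ((fun x => Fin.snoc x (0:ℝ)) '' B ∪ {Fin.snoc u σ}) := by
  obtain ⟨hli, hspan⟩ := hB
  have hσne : σ ≠ 0 := by rcases hσ with h | h <;> rw [h] <;> norm_num
  set α : Fin (d+1) → ℝ := Fin.snoc u σ with hα
  have himg : (fun x => Fin.snoc x (0:ℝ)) '' B = (sl d) '' B := by
    apply image_congr; intro x _; rfl
  rw [himg]
  have hBlatt : ∀ b ∈ B, IsLatticePt b := by
    intro b hb
    have : b ∈ latticeSubmodule d := hspan ▸ Submodule.subset_span hb
    exact mem_latticeSubmodule.1 this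
  -- span of image is inside the "last coordinate zero" hyperplane
  have hspan_le : Submodule.span ℝ ((sl d) '' B) ≤
      LinearMap.ker (LinearMap.proj (R := ℝ) (φ := fun _ : Fin (d+1) => ℝ) (Fin.last d)) := by
    rw [Submodule.span_le]
    rintro x ⟨b, _, rfl⟩
    simp [LinearMap.mem_ker]
  have hαnot : α ∉ Submodule.span ℝ ((sl d) '' B) := by
    intro h
    have := hspan_le h
    simp only [LinearMap.mem_ker, LinearMap.proj_apply] at this
    rw [hα] at this; simp at this; exact hσne this
  constructor
  · -- linear independence
    have h1 : LinearIndependent ℝ (fun x : ((sl d) '' B) => (x : Fin (d+1) → ℝ)) := by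
      apply LinearIndepOn.image (f := sl d) hli
      simp [LinearMap.ker_eq_bot_of_injective sl_inj]
    have h2 := LinearIndepOn.insert (v := id) h1 (by simpa using hαnot)
    have : insert α ((sl d) '' B) = (sl d) '' B ∪ {α} := by
      rw [Set.union_singleton]
    rw [← this]
    exact h2
  · -- ℤ-span equals lattice
    apply le_antisymm
    · rw [Submodule.span_le]
      rintro x (⟨b, hb, rfl⟩ | hx)
      · exact Submodule.subset_span (isLatticePt_snoc (hBlatt b hb) ⟨0, by simp⟩)
      · rcases hx with rfl
        refine Submodule.subset_span (isLatticePt_snoc hu ?_)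
        rcases hσ with h | h
        · exact ⟨1, by simp [h]⟩
        · exact ⟨-1, by simp [h]⟩
    · intro x hx
      have hxl : IsLatticePt x := mem_latticeSubmodule.1 hx
      obtain ⟨m, hm⟩ := hxl (Fin.last d)
      -- integer coefficient on the apex
      set k : ℤ := if σ = 1 then m else -m with hk
      have hkσ : (k : ℝ) * σ = x (Fin.last d) := by
        rcases hσ with h | h
        · rw [hk, if_pos h, h, hm]; ring
        · have hne : σ ≠ 1 := by rw [h]; norm_num
          rw [hk, if_neg hne, h, hm]; push_cast; ring
      set z : Fin (d+1) → ℝ := x - (k : ℤ) • α with hz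
      have hzlast : z (Fin.last d) = 0 := by
        have : z (Fin.last d) = x (Fin.last d) - (k:ℝ) * α (Fin.last d) := by
          simp [hz, zsmul_eq_mul]
        rw [this, hα]
        simp only [Fin.snoc_last]
        rw [← hkσ]; ring
      have hzinit : IsLatticePt (Fin.init z) := by
        intro j
        obtain ⟨n, hn⟩ := hxl (Fin.castSucc j)
        obtain ⟨p, hp⟩ := hu j
        refine ⟨n - k * p, ?_⟩
        show z (Fin.castSucc j) = _
        have hzc : z (Fin.castSucc j) = x (Fin.castSucc j) - (k:ℝ) * α (Fin.castSucc j) := by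
          simp [hz, zsmul_eq_mul]
        rw [hzc, hα]
        simp only [Fin.snoc_castSucc, hn, hp]
        push_cast; ring
      have hzmem : Fin.init z ∈ Submodule.span ℤ B := by
        rw [hspan, mem_latticeSubmodule]; exact hzinit
      have hzeq : z = sl d (Fin.init z) := by
        rw [← snoc_eq_self z, hzlast]; simp [Fin.init_snoc]
      have hslz : z ∈ Submodule.span ℤ ((sl d) '' B) := by
        have himg2 : ⇑(sl d) '' B = ⇑((sl d).restrictScalars ℤ) '' B := rfl
        rw [himg2, Submodule.span_image]
        exact ⟨Fin.init z, hzmem, hzeq.symm⟩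
      have : x = z + (k : ℤ) • α := by rw [hz]; abel
      rw [this]
      refine Submodule.add_mem _ ?_ ?_
      · exact Submodule.span_mono subset_union_left hslz
      · exact Submodule.smul_mem _ k (Submodule.subset_span (by simp))

-- the "vertical" unit vector
def ee (d : ℕ) : Fin (d+1) → ℝ := Fin.snoc (0 : Fin d → ℝ) (1:ℝ)

lemma aneg_eq (d : ℕ) : (Fin.snoc (0 : Fin d → ℝ) (-1:ℝ) : Fin (d+1) → ℝ) = -ee d := by
  funext i
  refine Fin.lastCases ?_ (fun j => ?_) i <;> simp [ee]

lemma apos_eq {d : ℕ} (v : Fin d → ℝ) :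
    (Fin.snoc v (1:ℝ) : Fin (d+1) → ℝ) = sl d v + ee d := by
  funext i
  refine Fin.lastCases ?_ (fun j => ?_) i <;> simp [ee]

lemma self_decomp {d : ℕ} (x : Fin (d+1) → ℝ) :
    x = sl d (Fin.init x) + x (Fin.last d) • ee d := by
  funext i
  refine Fin.lastCases ?_ (fun j => ?_) i <;> simp [ee, Fin.init]

@[simp] lemma ee_last (d : ℕ) : ee d (Fin.last d) = 1 := by simp [ee]

/-- two-coefficient convex combination with slack (origin absorbs the rest) -/
lemma conv3 {d : ℕ} {P : Set (Fin d → ℝ)} (hconv : Convex ℝ P)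
    (h0 : (0 : Fin d → ℝ) ∈ P) {w p : Fin d → ℝ} (hw : w ∈ P) (hp : p ∈ P)
    {a b : ℝ} (ha : 0 ≤ a) (hb : 0 ≤ b) (hab : a + b ≤ 1) :
    a • w + b • p ∈ P := by
  by_cases hm : a + b = 0
  · have ha0 : a = 0 := by linarith
    have hb0 : b = 0 := by linarith
    simpa [ha0, hb0] using h0
  · have hmpos : 0 < a + b := lt_of_le_of_ne (by linarith) (Ne.symm hm)
    have hq : (a/(a+b)) • w + (b/(a+b)) • p ∈ P := by
      apply hconv hw hp (by positivity) (by positivity)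
      field_simp
    have := hconv hq h0 (le_of_lt hmpos) (by linarith : (0:ℝ) ≤ 1 - (a+b)) (by ring)
    have heq : (a + b) • ((a/(a+b)) • w + (b/(a+b)) • p) + (1 - (a+b)) • (0 : Fin d → ℝ)
        = a • w + b • p := by
      rw [smul_add, smul_smul, smul_smul, smul_zero, add_zero,
        mul_div_cancel₀ _ hm, mul_div_cancel₀ _ hm]
    rwa [heq] at this

lemma memQ {d : ℕ} {P : Set (Fin d → ℝ)} (hne : P.Nonempty) (hconv : Convex ℝ P)
    (v : Fin d → ℝ) {x : Fin (d+1) → ℝ} :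
    x ∈ convexHull ℝ ((sl d) '' P ∪
        {Fin.snoc (0 : Fin d → ℝ) (-1:ℝ), Fin.snoc v (1:ℝ)}) ↔
    ∃ s t : ℝ, ∃ p ∈ P, 0 ≤ s ∧ s ≤ 1 ∧ 0 ≤ t ∧ t ≤ 1 ∧
      x = s • (Fin.snoc (0 : Fin d → ℝ) (-1:ℝ) : Fin (d+1) → ℝ) +
        (1-s) • (t • (Fin.snoc v (1:ℝ) : Fin (d+1) → ℝ) + (1-t) • sl d p) := by
  set A : Fin (d+1) → ℝ := Fin.snoc (0 : Fin d → ℝ) (-1:ℝ) with hA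
  set B : Fin (d+1) → ℝ := Fin.snoc v (1:ℝ) with hB
  have himgne : ((sl d) '' P).Nonempty := hne.image _
  have himgconv : Convex ℝ ((sl d) '' P) := hconv.linear_image (sl d)
  have hset : (sl d) '' P ∪ {A, B} = insert A (insert B ((sl d) '' P)) := by
    rw [Set.union_comm, Set.insert_union, Set.singleton_union]
  rw [hset, convexHull_insert (Set.insert_nonempty _ _),
    convexHull_insert himgne, himgconv.convexHull_eq]
  simp only [mem_convexJoin, Set.mem_singleton_iff, exists_eq_left]
  constructor
  · rintro ⟨z, ⟨w, ⟨q, hq, rfl⟩, hzseg⟩, hxseg⟩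
    obtain ⟨a₁, b₁, ha₁, hb₁, hab₁, hx⟩ := hxseg
    obtain ⟨a₂, b₂, ha₂, hb₂, hab₂, hz⟩ := hzseg
    refine ⟨a₁, a₂, q, hq, ha₁, by linarith, ha₂, by linarith, ?_⟩
    have e1 : b₁ = 1 - a₁ := by linarith
    have e2 : b₂ = 1 - a₂ := by linarith
    rw [← hx, ← hz, e1, e2]
  · rintro ⟨s, t, p, hp, hs0, hs1, ht0, ht1, hx⟩
    refine ⟨t • B + (1-t) • sl d p,
      ⟨sl d p, ⟨p, hp, rfl⟩, ⟨t, 1-t, ht0, by linarith, by ring, rfl⟩⟩,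
      ⟨s, 1-s, hs0, by linarith, by ring, hx.symm⟩⟩

/-- The skew bipyramid. -/
def Qset (d : ℕ) (P : Set (Fin d → ℝ)) (v : Fin d → ℝ) : Set (Fin (d+1) → ℝ) :=
  convexHull ℝ ((sl d) '' P ∪ {Fin.snoc (0 : Fin d → ℝ) (-1:ℝ), Fin.snoc v (1:ℝ)})

section Slice

variable {d : ℕ} {P : Set (Fin d → ℝ)} {v : Fin d → ℝ}
variable (hne : P.Nonempty) (hconv : Convex ℝ P)

lemma last_coord_combo {s t : ℝ} {p : Fin d → ℝ} :
    (s • (Fin.snoc (0 : Fin d → ℝ) (-1:ℝ) : Fin (d+1) → ℝ) +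
      (1-s) • (t • (Fin.snoc v (1:ℝ) : Fin (d+1) → ℝ) + (1-t) • sl d p)) (Fin.last d)
      = (1-s)*t - s := by
  simp [Fin.snoc_last]
  ring

include hne hconv in
lemma last_bounds {x : Fin (d+1) → ℝ} (hx : x ∈ Qset d P v) :
    -1 ≤ x (Fin.last d) ∧ x (Fin.last d) ≤ 1 := by
  obtain ⟨s, t, p, hp, hs0, hs1, ht0, ht1, hxe⟩ := (memQ hne hconv v).1 hx
  have : x (Fin.last d) = (1-s)*t - s := by rw [hxe]; exact last_coord_combo
  rw [this]
  constructor <;> nlinarith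

include hne hconv in
lemma slice_pos (h0 : (0 : Fin d → ℝ) ∈ P) (hvP : v ∈ P) {x : Fin (d+1) → ℝ}
    (hx : x ∈ Qset d P v) (hτ0 : 0 ≤ x (Fin.last d)) :
    ∃ y ∈ P, x = (x (Fin.last d)) • (Fin.snoc v (1:ℝ) : Fin (d+1) → ℝ) +
      (1 - x (Fin.last d)) • sl d y := by
  obtain ⟨s, t, p, hp, hs0, hs1, ht0, ht1, hxe⟩ := (memQ hne hconv v).1 hx
  set τ := x (Fin.last d) with hτdef
  have hτ : τ = (1-s)*t - s := by rw [hτdef, hxe]; exact last_coord_combo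
  have hτ1 : τ ≤ 1 := by nlinarith
  by_cases hcase : τ = 1
  · have hs : s = 0 := by nlinarith
    have ht : t = 1 := by nlinarith
    refine ⟨p, hp, ?_⟩
    rw [hxe, hs, ht, hcase]
    module
  · have hτlt : τ < 1 := lt_of_le_of_ne hτ1 hcase
    have h1τ : (0:ℝ) < 1 - τ := by linarith
    refine ⟨(s/(1-τ)) • v + ((1-s)*(1-t)/(1-τ)) • p, ?_, ?_⟩
    · apply conv3 hconv h0 hvP hp
      · exact div_nonneg hs0 (le_of_lt h1τ)
      · exact div_nonneg (mul_nonneg (by linarith) (by linarith)) (le_of_lt h1τ)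
      · rw [← add_div, div_le_one h1τ]; nlinarith
    · have hArel : (Fin.snoc (0 : Fin d → ℝ) (-1:ℝ) : Fin (d+1) → ℝ) =
          sl d v - Fin.snoc v (1:ℝ) := by
        rw [aneg_eq, apos_eq]; abel
      rw [hxe, hArel, map_add, map_smul, map_smul]
      match_scalars
      all_goals field_simp
      all_goals nlinarith [hτ]

include hne hconv in
lemma slice_neg (h0 : (0 : Fin d → ℝ) ∈ P) (hvP : v ∈ P) {x : Fin (d+1) → ℝ}
    (hx : x ∈ Qset d P v) (hτ0 : x (Fin.last d) ≤ 0) :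
    ∃ y ∈ P, x = (-(x (Fin.last d))) • (Fin.snoc (0 : Fin d → ℝ) (-1:ℝ) : Fin (d+1) → ℝ) +
      (1 + x (Fin.last d)) • sl d y := by
  obtain ⟨s, t, p, hp, hs0, hs1, ht0, ht1, hxe⟩ := (memQ hne hconv v).1 hx
  set τ := x (Fin.last d) with hτdef
  have hτ : τ = (1-s)*t - s := by rw [hτdef, hxe]; exact last_coord_combo
  have hτ1 : -1 ≤ τ := by nlinarith
  by_cases hcase : τ = -1
  · have hs : s = 1 := by nlinarith
    refine ⟨0, h0, ?_⟩
    rw [hxe, hs, hcase]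
    module
  · have hτlt : -1 < τ := lt_of_le_of_ne hτ1 (Ne.symm hcase)
    have h1τ : (0:ℝ) < 1 + τ := by linarith
    refine ⟨((1-s)*t/(1+τ)) • v + ((1-s)*(1-t)/(1+τ)) • p, ?_, ?_⟩
    · apply conv3 hconv h0 hvP hp
      · exact div_nonneg (mul_nonneg (by linarith) ht0) (le_of_lt h1τ)
      · exact div_nonneg (mul_nonneg (by linarith) (by linarith)) (le_of_lt h1τ)
      · rw [← add_div, div_le_one h1τ]; nlinarith
    · have hBrel : (Fin.snoc v (1:ℝ) : Fin (d+1) → ℝ) =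
          sl d v - Fin.snoc (0 : Fin d → ℝ) (-1:ℝ) := by
        rw [aneg_eq, apos_eq]; abel
      rw [hxe, hBrel, map_add, map_smul, map_smul]
      match_scalars
      all_goals field_simp
      all_goals nlinarith [hτ]

include hne hconv in
lemma mem_last_zero (h0 : (0 : Fin d → ℝ) ∈ P) (hvP : v ∈ P) {x : Fin (d+1) → ℝ}
    (hx : x ∈ Qset d P v) (h : x (Fin.last d) = 0) : ∃ y ∈ P, x = sl d y := by
  obtain ⟨y, hy, hxe⟩ := slice_pos hne hconv h0 hvP hx (by rw [h])
  exact ⟨y, hy, by rw [hxe, h]; module⟩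

include hne hconv in
lemma mem_last_one (h0 : (0 : Fin d → ℝ) ∈ P) (hvP : v ∈ P) {x : Fin (d+1) → ℝ}
    (hx : x ∈ Qset d P v) (h : x (Fin.last d) = 1) : x = Fin.snoc v (1:ℝ) := by
  obtain ⟨y, hy, hxe⟩ := slice_pos hne hconv h0 hvP hx (by rw [h]; norm_num)
  rw [hxe, h]
  module

include hne hconv in
lemma mem_last_negone (h0 : (0 : Fin d → ℝ) ∈ P) (hvP : v ∈ P) {x : Fin (d+1) → ℝ}
    (hx : x ∈ Qset d P v) (h : x (Fin.last d) = -1) :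
    x = Fin.snoc (0 : Fin d → ℝ) (-1:ℝ) := by
  obtain ⟨y, hy, hxe⟩ := slice_neg hne hconv h0 hvP hx (by rw [h]; norm_num)
  rw [hxe, h]
  module

end Slice


lemma vectorSpan_linear_image {m n : ℕ} (f : (Fin m → ℝ) →ₗ[ℝ] (Fin n → ℝ))
    (s : Set (Fin m → ℝ)) : vectorSpan ℝ (⇑f '' s) = (vectorSpan ℝ s).map f := by
  rw [vectorSpan_def, vectorSpan_def, ← Submodule.span_image]
  congr 1
  ext z
  simp only [Set.mem_vsub, Set.mem_image, vsub_eq_sub]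
  constructor
  · rintro ⟨w₁, ⟨a, ha, rfl⟩, w₂, ⟨b, hb, rfl⟩, rfl⟩
    exact ⟨a - b, ⟨a, ha, b, hb, rfl⟩, map_sub f a b⟩
  · rintro ⟨w, ⟨a, ha, b, hb, rfl⟩, rfl⟩
    exact ⟨f a, ⟨a, ha, rfl⟩, f b, ⟨b, hb, rfl⟩, (map_sub f a b).symm⟩

lemma fdim_sl_image {d : ℕ} (s : Set (Fin d → ℝ)) : fdim ((sl d) '' s) = fdim s := by
  unfold fdim
  rw [vectorSpan_linear_image]
  exact (LinearEquiv.finrank_eq (Submodule.equivMapOfInjective (sl d) sl_inj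
    (vectorSpan ℝ s))).symm

lemma fdim_le {n : ℕ} (F : Set (Fin n → ℝ)) : fdim F ≤ n := by
  have := Submodule.finrank_le (vectorSpan ℝ F)
  rwa [Module.finrank_fin_fun] at this

lemma dotp_eq_zero_on_top {n : ℕ} {c : Fin n → ℝ} {G : Set (Fin n → ℝ)}
    (htop : vectorSpan ℝ G = ⊤)
    (hconst : ∀ g₁ ∈ G, ∀ g₂ ∈ G, dotp c g₁ = dotp c g₂) : c = 0 := by
  have hle : vectorSpan ℝ G ≤ LinearMap.ker (dlin c) := by
    rw [vectorSpan_def, Submodule.span_le]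
    rintro z ⟨g₁, hg₁, g₂, hg₂, rfl⟩
    simp only [SetLike.mem_coe, LinearMap.mem_ker, vsub_eq_sub, map_sub, dlin_apply]
    rw [hconst g₁ hg₁ g₂ hg₂]; ring
  rw [htop] at hle
  have : dotp c c = 0 := hle (Submodule.mem_top (x := c))
  exact eq_zero_of_dotp_self this

section Fulldim

variable {d : ℕ} {P : Set (Fin d → ℝ)} {v : Fin d → ℝ}
variable (hne : P.Nonempty) (hconv : Convex ℝ P)

lemma slP_subset_Q : (sl d) '' P ⊆ Qset d P v :=
  subset_trans (Set.subset_union_left) (subset_convexHull ℝ _)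

lemma apos_mem_Q : (Fin.snoc v (1:ℝ) : Fin (d+1) → ℝ) ∈ Qset d P v :=
  subset_convexHull ℝ _ (Set.mem_union_right _ (by simp))

lemma aneg_mem_Q : (Fin.snoc (0 : Fin d → ℝ) (-1:ℝ) : Fin (d+1) → ℝ) ∈ Qset d P v :=
  subset_convexHull ℝ _ (Set.mem_union_right _ (by simp))

lemma vectorSpan_Q_top (hvP : v ∈ P) (hPdim : fdim P = d) :
    vectorSpan ℝ (Qset d P v) = ⊤ := by
  have hPtop : vectorSpan ℝ P = ⊤ := by
    apply Submodule.eq_top_of_finrank_eq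
    rw [Module.finrank_fin_fun]
    exact hPdim
  refine le_antisymm le_top ?_
  have hmap : (vectorSpan ℝ P).map (sl d) ≤ vectorSpan ℝ (Qset d P v) := by
    rw [← vectorSpan_linear_image]
    exact vectorSpan_mono ℝ slP_subset_Q
  rw [hPtop, Submodule.map_top] at hmap
  have hee : ee d ∈ vectorSpan ℝ (Qset d P v) := by
    have h1 : (Fin.snoc v (1:ℝ) : Fin (d+1) → ℝ) ∈ Qset d P v := apos_mem_Q
    have h2 : sl d v ∈ Qset d P v := slP_subset_Q ⟨v, hvP, rfl⟩
    have := vsub_mem_vectorSpan ℝ h1 h2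
    rwa [vsub_eq_sub, apos_eq, add_sub_cancel_left] at this
  intro z _
  rw [self_decomp z]
  exact Submodule.add_mem _ (hmap (LinearMap.mem_range_self _ _))
    (Submodule.smul_mem _ _ hee)

lemma fdim_Q (hvP : v ∈ P) (hPdim : fdim P = d) : fdim (Qset d P v) = d + 1 := by
  unfold fdim
  rw [vectorSpan_Q_top hvP hPdim, finrank_top, Module.finrank_fin_fun]

include hne hconv in
lemma zero_mem_interior_Q (h0int : (0 : Fin d → ℝ) ∈ interior P) (hvP : v ∈ P) :
    (0 : Fin (d+1) → ℝ) ∈ interior (Qset d P v) := by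
  obtain ⟨ε, hεpos, hball⟩ := Metric.mem_nhds_iff.1 (mem_interior_iff_mem_nhds.1 h0int)
  set δ : ℝ := min (1/2) (ε/(4*(1+‖v‖))) with hδdef
  have hvnorm : (0:ℝ) < 1 + ‖v‖ := by positivity
  have hδpos : 0 < δ := by
    apply lt_min (by norm_num)
    positivity
  have hδhalf : δ ≤ 1/2 := min_le_left _ _
  have hδε : δ ≤ ε/(4*(1+‖v‖)) := min_le_right _ _
  suffices hsub : Metric.ball (0 : Fin (d+1) → ℝ) δ ⊆ Qset d P v by
    exact interior_maximal hsub Metric.isOpen_ball (Metric.mem_ball_self hδpos)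
  intro x hx
  rw [Metric.mem_ball, dist_zero_right] at hx
  set τ := x (Fin.last d) with hτdef
  have hτabs : |τ| < δ := by
    calc |τ| = ‖x (Fin.last d)‖ := rfl
    _ ≤ ‖x‖ := norm_le_pi_norm x (Fin.last d)
    _ < δ := hx
  have hinitnorm : ‖Fin.init x‖ < δ := by
    apply lt_of_le_of_lt _ hx
    rw [pi_norm_le_iff_of_nonneg (norm_nonneg x)]
    intro j
    exact norm_le_pi_norm x (Fin.castSucc j)
  have hQconv : Convex ℝ (Qset d P v) := convex_convexHull ℝ _
  rcases le_or_gt 0 τ with hτ0 | hτ0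
  · -- use apex snoc v 1
    have hτlt : τ < 1/2 := lt_of_lt_of_le (lt_of_abs_lt hτabs) hδhalf
    have h1τ : (0:ℝ) < 1 - τ := by linarith
    set y : Fin d → ℝ := (1/(1-τ)) • (Fin.init x - τ • v) with hydef
    have hynorm : ‖y‖ < ε := by
      rw [hydef, norm_smul]
      have h1 : ‖Fin.init x - τ • v‖ ≤ ‖Fin.init x‖ + τ * ‖v‖ := by
        calc ‖Fin.init x - τ • v‖ ≤ ‖Fin.init x‖ + ‖τ • v‖ := norm_sub_le _ _
        _ = ‖Fin.init x‖ + |τ| * ‖v‖ := by rw [norm_smul, Real.norm_eq_abs]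
        _ = ‖Fin.init x‖ + τ * ‖v‖ := by rw [abs_of_nonneg hτ0]
      have h2 : ‖(1/(1-τ))‖ = 1/(1-τ) := Real.norm_of_nonneg (by positivity)
      rw [h2]
      have h3 : ‖Fin.init x‖ + τ * ‖v‖ < δ * (1 + ‖v‖) := by
        have := lt_of_abs_lt hτabs
        nlinarith [norm_nonneg (Fin.init x), norm_nonneg v]
      have h4 : 1/(1-τ) < 2 := by
        rw [div_lt_iff₀ h1τ]; linarith
      have h5 : δ * (1 + ‖v‖) ≤ ε / 4 := by
        have h6 := (le_div_iff₀ (by positivity : (0:ℝ) < 4*(1+‖v‖))).1 hδε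
        nlinarith
      calc 1/(1-τ) * ‖Fin.init x - τ • v‖ ≤ 1/(1-τ) * (‖Fin.init x‖ + τ * ‖v‖) := by
            apply mul_le_mul_of_nonneg_left h1 (by positivity)
      _ < 2 * (ε/4) := by
            apply mul_lt_mul' (le_of_lt h4) (lt_of_lt_of_le h3 h5) (by positivity) (by norm_num)
      _ < ε := by linarith
    have hyP : y ∈ P := hball (by rwa [Metric.mem_ball, dist_zero_right])
    have hxeq : x = τ • (Fin.snoc v (1:ℝ) : Fin (d+1) → ℝ) + (1-τ) • sl d y := by
      rw [apos_eq, hydef, map_smul, map_sub, map_smul]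
      nth_rewrite 1 [self_decomp x]
      rw [← hτdef]
      match_scalars <;> (first | (field_simp; ring) | field_simp)
    rw [hxeq]
    exact hQconv apos_mem_Q (slP_subset_Q ⟨y, hyP, rfl⟩) hτ0 (by linarith) (by ring)
  · -- use apex snoc 0 (-1)
    have hτgt : -(1/2) < τ := by
      have := neg_lt_of_abs_lt hτabs
      linarith [hδhalf]
    have h1τ : (0:ℝ) < 1 + τ := by linarith
    set y : Fin d → ℝ := (1/(1+τ)) • Fin.init x with hydef
    have hynorm : ‖y‖ < ε := by
      rw [hydef, norm_smul]
      have h2 : ‖(1/(1+τ))‖ = 1/(1+τ) := Real.norm_of_nonneg (by positivity)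
      have h4 : 1/(1+τ) < 2 := by
        rw [div_lt_iff₀ h1τ]; linarith
      have h5 : δ ≤ ε / 4 := by
        apply le_trans hδε
        apply div_le_div_of_nonneg_left (le_of_lt hεpos) (by norm_num)
        nlinarith [norm_nonneg v]
      rw [h2]
      calc 1/(1+τ) * ‖Fin.init x‖ < 2 * (ε/4) := by
            apply mul_lt_mul' (le_of_lt h4) (lt_of_lt_of_le hinitnorm h5) (norm_nonneg _)
              (by norm_num)
      _ < ε := by linarith
    have hyP : y ∈ P := hball (by rwa [Metric.mem_ball, dist_zero_right])
    have hxeq : x = (-τ) • (Fin.snoc (0 : Fin d → ℝ) (-1:ℝ) : Fin (d+1) → ℝ) +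
        (1+τ) • sl d y := by
      rw [aneg_eq, hydef, map_smul]
      nth_rewrite 1 [self_decomp x]
      rw [← hτdef]
      match_scalars <;> (first | (field_simp; ring) | field_simp)
    rw [hxeq]
    exact hQconv aneg_mem_Q (slP_subset_Q ⟨y, hyP, rfl⟩) (by linarith) (by linarith) (by ring)

end Fulldim

lemma dotp_zero_left {n : ℕ} (x : Fin n → ℝ) : dotp (0 : Fin n → ℝ) x = 0 := by
  simp [dotp]

lemma dotp_two {n : ℕ} (c : Fin n → ℝ) (a b : ℝ) (X Y : Fin n → ℝ) :
    dotp c (a • X + b • Y) = a * dotp c X + b * dotp c Y := by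
  simp only [dotp_add_right, dotp_smul_right]

lemma dotp_combo {n : ℕ} (c : Fin n → ℝ) (s t : ℝ) (A B C : Fin n → ℝ) :
    dotp c (s • A + (1-s) • (t • B + (1-t) • C)) =
      s * dotp c A + ((1-s)*t) * dotp c B + ((1-s)*(1-t)) * dotp c C := by
  simp only [dotp_add_right, dotp_smul_right]
  ring

lemma combo3_aux {w1 w2 w3 v1 v2 v3 b : ℝ} (h2 : 0 ≤ w2) (h3 : 0 ≤ w3)
    (hsum : w1 + w2 + w3 = 1) (hv1 : v1 ≤ b) (hv2 : v2 ≤ b) (hv3 : v3 ≤ b)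
    (heq : w1*v1 + w2*v2 + w3*v3 = b) (h : 0 < w1) : v1 = b := by
  refine le_antisymm hv1 ?_
  by_contra hlt
  push_neg at hlt
  have e1 := mul_lt_mul_of_pos_left hlt h
  have e2 := mul_le_mul_of_nonneg_left hv2 h2
  have e3 := mul_le_mul_of_nonneg_left hv3 h3
  have e4 : (w1+w2+w3)*b = b := by rw [hsum, one_mul]
  nlinarith

lemma combo3 {w1 w2 w3 v1 v2 v3 b : ℝ} (h1 : 0 ≤ w1) (h2 : 0 ≤ w2) (h3 : 0 ≤ w3)
    (hsum : w1 + w2 + w3 = 1) (hv1 : v1 ≤ b) (hv2 : v2 ≤ b) (hv3 : v3 ≤ b)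
    (heq : w1*v1 + w2*v2 + w3*v3 = b) :
    (0 < w1 → v1 = b) ∧ (0 < w2 → v2 = b) ∧ (0 < w3 → v3 = b) :=
  ⟨combo3_aux h2 h3 hsum hv1 hv2 hv3 heq,
   combo3_aux h1 h3 (by linarith) hv2 hv1 hv3 (by linarith),
   combo3_aux h1 h2 (by linarith) hv3 hv1 hv2 (by linarith)⟩

section Facet

variable {d : ℕ} {P : Set (Fin d → ℝ)} {v : Fin d → ℝ} {c : Fin (d+1) → ℝ} {b : ℝ}
  {F : Set (Fin (d+1) → ℝ)}

/-- Decompose a point of an (exposed) face `F` of the bipyramid, recording that the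
generators carrying positive weight lie in `F` as well. -/
lemma decompF (hne : P.Nonempty) (hconv : Convex ℝ P)
    (hbd : ∀ x ∈ Qset d P v, dotp c x ≤ b)
    (hFeq : F = {x ∈ Qset d P v | dotp c x = b}) {x : Fin (d+1) → ℝ} (hx : x ∈ F) :
    ∃ s t : ℝ, ∃ p : Fin d → ℝ, p ∈ P ∧ 0 ≤ s ∧ s ≤ 1 ∧ 0 ≤ t ∧ t ≤ 1 ∧
      x = s • (Fin.snoc (0 : Fin d → ℝ) (-1:ℝ) : Fin (d+1) → ℝ) +
        (1-s) • (t • (Fin.snoc v (1:ℝ) : Fin (d+1) → ℝ) + (1-t) • sl d p) ∧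
      (0 < s → (Fin.snoc (0 : Fin d → ℝ) (-1:ℝ) : Fin (d+1) → ℝ) ∈ F) ∧
      (0 < (1-s)*t → (Fin.snoc v (1:ℝ) : Fin (d+1) → ℝ) ∈ F) ∧
      (0 < (1-s)*(1-t) → sl d p ∈ F) := by
  have hxQ : x ∈ Qset d P v := by rw [hFeq] at hx; exact hx.1
  have hxv : dotp c x = b := by rw [hFeq] at hx; exact hx.2
  obtain ⟨s, t, p, hp, hs0, hs1, ht0, ht1, hxe⟩ := (memQ hne hconv v).1 hxQ
  have hAQ : (Fin.snoc (0 : Fin d → ℝ) (-1:ℝ) : Fin (d+1) → ℝ) ∈ Qset d P v := aneg_mem_Q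
  have hBQ : (Fin.snoc v (1:ℝ) : Fin (d+1) → ℝ) ∈ Qset d P v := apos_mem_Q
  have hCQ : sl d p ∈ Qset d P v := slP_subset_Q ⟨p, hp, rfl⟩
  have hval : s * dotp c (Fin.snoc (0 : Fin d → ℝ) (-1:ℝ)) +
      ((1-s)*t) * dotp c (Fin.snoc v (1:ℝ)) + ((1-s)*(1-t)) * dotp c (sl d p) = b := by
    rw [← dotp_combo, ← hxe, hxv]
  obtain ⟨k1, k2, k3⟩ := combo3 hs0 (mul_nonneg (by linarith) ht0)
    (mul_nonneg (by linarith) (by linarith)) (by ring) (hbd _ hAQ) (hbd _ hBQ)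
    (hbd _ hCQ) hval
  refine ⟨s, t, p, hp, hs0, hs1, ht0, ht1, hxe, ?_, ?_, ?_⟩
  · intro h; rw [hFeq]; exact ⟨hAQ, k1 h⟩
  · intro h; rw [hFeq]; exact ⟨hBQ, k2 h⟩
  · intro h; rw [hFeq]; exact ⟨hCQ, k3 h⟩

end Facet

section FacetKey

variable {d : ℕ} {P : Set (Fin d → ℝ)} {v : Fin d → ℝ} {c : Fin (d+1) → ℝ} {b : ℝ}
  {F : Set (Fin (d+1) → ℝ)} {σ : ℝ} {u : Fin d → ℝ}

lemma facet_key
    (hne : P.Nonempty) (hconv : Convex ℝ P) (h0P : (0:Fin d → ℝ) ∈ P) (hvP : v ∈ P)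
    (hPdim : fdim P = d) (hdpos : 1 ≤ d)
    (hfacets : ∀ G, IsFacet P G → IsLatticeBasisSet (Set.extremePoints ℝ G))
    (huZ : IsLatticePt u)
    (hbd : ∀ x ∈ Qset d P v, dotp c x ≤ b)
    (hFeq : F = {x ∈ Qset d P v | dotp c x = b})
    (hFdim : fdim F = d)
    (hcase : (σ = 1 ∧ u = v) ∨ (σ = -1 ∧ u = 0))
    (hαF : (Fin.snoc u σ : Fin (d+1) → ℝ) ∈ F)
    (hsign : ∀ x ∈ F, 0 ≤ σ * x (Fin.last d)) :
    IsLatticeBasisSet (Set.extremePoints ℝ F) := by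
  set α : Fin (d+1) → ℝ := Fin.snoc u σ with hαdef
  have hσ1 : σ = 1 ∨ σ = -1 := hcase.imp And.left And.left
  have hσne : σ ≠ 0 := by rcases hσ1 with h|h <;> rw [h] <;> norm_num
  have hσsq : σ * σ = 1 := by rcases hσ1 with h|h <;> rw [h] <;> norm_num
  have hαl : α (Fin.last d) = σ := by rw [hαdef]; simp
  have hFsubQ : ∀ x ∈ F, x ∈ Qset d P v := by
    intro x hx; rw [hFeq] at hx; exact hx.1
  have hFval : ∀ x ∈ F, dotp c x = b := by
    intro x hx; rw [hFeq] at hx; exact hx.2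
  have hmemF : ∀ x, x ∈ Qset d P v → dotp c x = b → x ∈ F := by
    intro x h1 h2; rw [hFeq]; exact ⟨h1, h2⟩
  have htip : ∀ x ∈ Qset d P v, x (Fin.last d) = σ → x = α := by
    intro x hx hlast
    rcases hcase with ⟨h1, h2⟩ | ⟨h1, h2⟩
    · rw [hαdef, h1, h2]
      exact mem_last_one hne hconv h0P hvP hx (by rw [hlast, h1])
    · rw [hαdef, h1, h2]
      exact mem_last_negone hne hconv h0P hvP hx (by rw [hlast, h1])
  have hslice : ∀ x ∈ Qset d P v, 0 ≤ σ * x (Fin.last d) →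
      ∃ y ∈ P, x = (σ * x (Fin.last d)) • α + (1 - σ * x (Fin.last d)) • sl d y := by
    intro x hx hs
    rcases hcase with ⟨h1, h2⟩ | ⟨h1, h2⟩
    · obtain ⟨y, hy, he⟩ := slice_pos hne hconv h0P hvP hx (by
        rw [h1] at hs; linarith)
      refine ⟨y, hy, ?_⟩
      rw [hαdef, h1, h2, one_mul]
      exact he
    · obtain ⟨y, hy, he⟩ := slice_neg hne hconv h0P hvP hx (by
        rw [h1] at hs; linarith)
      refine ⟨y, hy, ?_⟩
      rw [hαdef, h1, h2]
      have e2 : (1:ℝ) - -1 * x (Fin.last d) = 1 + x (Fin.last d) := by ring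
      have e1 : (-1:ℝ) * x (Fin.last d) = -(x (Fin.last d)) := by ring
      rw [e2, e1]
      exact he
  have hlastbound : ∀ x ∈ Qset d P v, σ * x (Fin.last d) ≤ 1 := by
    intro x hx
    obtain ⟨hl, hr⟩ := last_bounds hne hconv hx
    rcases hσ1 with h|h <;> rw [h] <;> nlinarith
  have hσtip : ∀ x ∈ F, σ * x (Fin.last d) = 1 → x = α := by
    intro x hx h1
    apply htip x (hFsubQ x hx)
    have h3 : σ * (σ * x (Fin.last d)) = σ * 1 := by rw [h1]
    rwa [← mul_assoc, hσsq, one_mul, mul_one] at h3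
  -- the shadow face G of P
  set c' : Fin d → ℝ := Fin.init c with hc'def
  set G : Set (Fin d → ℝ) := {w ∈ P | dotp c' w = b} with hGdef
  have hGbd : ∀ w ∈ P, dotp c' w ≤ b := by
    intro w hw
    have := hbd (sl d w) (slP_subset_Q ⟨w, hw, rfl⟩)
    rwa [sl_apply, dotp_snoc, mul_zero, add_zero] at this
  have hcα : dotp c α = b := hFval _ hαF
  have hcα' : dotp c' u + c (Fin.last d) * σ = b := by
    rw [hc'def, ← dotp_snoc]; exact hcα
  have hGsubF : ∀ w ∈ G, sl d w ∈ F := by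
    intro w hw
    exact hmemF _ (slP_subset_Q ⟨w, hw.1, rfl⟩)
      (by rw [sl_apply, dotp_snoc, mul_zero, add_zero]; exact hw.2)
  have hlast0 : ∀ x ∈ F, x (Fin.last d) = 0 → ∃ w ∈ G, x = sl d w := by
    intro x hx h0
    obtain ⟨y, hy, he⟩ := mem_last_zero hne hconv h0P hvP (hFsubQ x hx) h0
    refine ⟨y, ⟨hy, ?_⟩, he⟩
    have hvx := hFval x hx
    rw [he, sl_apply, dotp_snoc, mul_zero, add_zero] at hvx
    exact hvx
  have hdecomp : ∀ x ∈ F, x = α ∨ (σ * x (Fin.last d) < 1 ∧ ∃ y ∈ G,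
      x = (σ * x (Fin.last d)) • α + (1 - σ * x (Fin.last d)) • sl d y) := by
    intro x hx
    rcases eq_or_lt_of_le (hlastbound x (hFsubQ x hx)) with heq1 | hlt
    · exact Or.inl (hσtip x hx heq1)
    · right
      refine ⟨hlt, ?_⟩
      obtain ⟨y, hy, he⟩ := hslice x (hFsubQ x hx) (hsign x hx)
      refine ⟨y, ⟨hy, ?_⟩, he⟩
      have hv2 := hFval x hx
      rw [he, dotp_two, hcα] at hv2
      have hsly : dotp c (sl d y) = dotp c' y := by
        rw [sl_apply, dotp_snoc, mul_zero, add_zero, hc'def]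
      rw [hsly] at hv2
      have h1τ : 0 < 1 - σ * x (Fin.last d) := by linarith
      have hmul : (1 - σ * x (Fin.last d)) * dotp c' y
          = (1 - σ * x (Fin.last d)) * b := by nlinarith [hv2]
      exact mul_left_cancel₀ (ne_of_gt h1τ) hmul
  -- F has a point other than α
  have hxne : ∃ x ∈ F, x ≠ α := by
    by_contra h
    push_neg at h
    have hsub : F ⊆ {α} := fun x hx => h x hx
    have h1 : fdim F ≤ fdim ({α} : Set (Fin (d+1) → ℝ)) :=
      Submodule.finrank_mono (vectorSpan_mono ℝ hsub)
    have h2 : fdim ({α} : Set (Fin (d+1) → ℝ)) = 0 := by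
      unfold fdim
      rw [vectorSpan_singleton]
      exact finrank_bot ℝ _
    omega
  have hGne : G.Nonempty := by
    obtain ⟨x, hxF, hxa⟩ := hxne
    rcases hdecomp x hxF with rfl | ⟨_, y, hy, _⟩
    · exact absurd rfl hxa
    · exact ⟨y, hy⟩
  -- description of the extreme points of F
  set B := Set.extremePoints ℝ G with hBdef
  have hEeq : Set.extremePoints ℝ F = (sl d) '' B ∪ {α} := by
    apply Set.Subset.antisymm
    · intro x hx
      obtain ⟨hxF, hxext⟩ := (mem_extremePoints).1 hx
      rcases hdecomp x hxF with rfl | ⟨hlt, y, hyG, he⟩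
      · exact Or.inr rfl
      · rcases eq_or_lt_of_le (hsign x hxF) with h0 | hpos
        · -- x lies in the bottom slice
          have hxl0 : σ * x (Fin.last d) = 0 := h0.symm
          have hxe : x = sl d y := by
            rw [he, hxl0]
            module
          left
          refine ⟨y, ?_, hxe.symm⟩
          rw [hBdef, mem_extremePoints]
          refine ⟨hyG, ?_⟩
          rintro y₁ hy₁ y₂ hy₂ ⟨a1, a2, ha1, ha2, hsum, hcomb⟩
          have hseg : x ∈ openSegment ℝ (sl d y₁) (sl d y₂) :=
            ⟨a1, a2, ha1, ha2, hsum, by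
              rw [← map_smul, ← map_smul, ← map_add, hcomb, ← hxe]⟩
          obtain ⟨e1, e2⟩ := hxext _ (hGsubF _ hy₁) _ (hGsubF _ hy₂) hseg
          exact ⟨sl_inj (e1.trans hxe), sl_inj (e2.trans hxe)⟩
        · exfalso
          have hseg : x ∈ openSegment ℝ α (sl d y) :=
            ⟨σ * x (Fin.last d), 1 - σ * x (Fin.last d), hpos, by linarith, by ring, he.symm⟩
          obtain ⟨e1, e2⟩ := hxext _ hαF _ (hGsubF _ hyG) hseg
          have hco : α = sl d y := e1.trans e2.symm
          have hl := congrFun hco (Fin.last d)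
          rw [hαl, sl_last] at hl
          exact hσne hl
    · rintro x (⟨y, hyB, rfl⟩ | rfl)
      · -- points over extreme points of G are extreme in F
        have hyG : y ∈ G := extremePoints_subset hyB
        rw [mem_extremePoints]
        refine ⟨hGsubF _ hyG, ?_⟩
        rintro x₁ hx₁ x₂ hx₂ ⟨a1, a2, ha1, ha2, hsum, hcomb⟩
        have hcl := congrFun hcomb (Fin.last d)
        simp only [Pi.add_apply, Pi.smul_apply, smul_eq_mul, sl_last] at hcl
        have hsgn1 := hsign x₁ hx₁
        have hsgn2 := hsign x₂ hx₂
        have hclσ : a1 * (σ * x₁ (Fin.last d)) + a2 * (σ * x₂ (Fin.last d)) = 0 := by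
          linear_combination σ * hcl
        have hz1 : σ * x₁ (Fin.last d) = 0 := by nlinarith
        have hz2 : σ * x₂ (Fin.last d) = 0 := by nlinarith
        have hx₁l : x₁ (Fin.last d) = 0 := by
          rcases mul_eq_zero.1 hz1 with h | h
          · exact absurd h hσne
          · exact h
        have hx₂l : x₂ (Fin.last d) = 0 := by
          rcases mul_eq_zero.1 hz2 with h | h
          · exact absurd h hσne
          · exact h
        obtain ⟨w₁, hw₁, rfl⟩ := hlast0 _ hx₁ hx₁l
        obtain ⟨w₂, hw₂, rfl⟩ := hlast0 _ hx₂ hx₂l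
        have hyseg : y ∈ openSegment ℝ w₁ w₂ :=
          ⟨a1, a2, ha1, ha2, hsum, sl_inj (by rw [map_add, map_smul, map_smul, hcomb])⟩
        obtain ⟨e1, e2⟩ := ((mem_extremePoints).1 hyB).2 w₁ hw₁ w₂ hw₂ hyseg
        exact ⟨by rw [e1], by rw [e2]⟩
      · -- α is extreme in F
        rw [mem_extremePoints]
        refine ⟨hαF, ?_⟩
        rintro x₁ hx₁ x₂ hx₂ ⟨a1, a2, ha1, ha2, hsum, hcomb⟩
        have hcl := congrFun hcomb (Fin.last d)
        simp only [Pi.add_apply, Pi.smul_apply, smul_eq_mul] at hcl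
        rw [hαl] at hcl
        have hclσ : a1 * (σ * x₁ (Fin.last d)) + a2 * (σ * x₂ (Fin.last d)) = 1 := by
          linear_combination σ * hcl + hσsq
        have hb1 := hlastbound x₁ (hFsubQ _ hx₁)
        have hb2 := hlastbound x₂ (hFsubQ _ hx₂)
        have he1 : σ * x₁ (Fin.last d) = 1 := by nlinarith
        have he2 : σ * x₂ (Fin.last d) = 1 := by nlinarith
        exact ⟨hσtip _ hx₁ he1, hσtip _ hx₂ he2⟩
  -- G is a facet of P
  have hGface : IsFace P G := ⟨c', b, hGbd, hGdef⟩
  have hGne_top : Module.finrank ℝ (vectorSpan ℝ G) ≠ d := by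
    intro htop
    have hGtop : vectorSpan ℝ G = ⊤ := Submodule.eq_top_of_finrank_eq
      (by rw [Module.finrank_fin_fun]; exact htop)
    have hc'0 : c' = 0 := dotp_eq_zero_on_top hGtop
      (by intro g₁ h₁ g₂ h₂; rw [h₁.2, h₂.2])
    have hb0 : b = 0 := by
      obtain ⟨g, hg⟩ := hGne
      have h2 := hg.2
      rw [hc'0, dotp_zero_left] at h2
      exact h2.symm
    have hγ0 : c (Fin.last d) = 0 := by
      have h3 := hcα'
      rw [hc'0, dotp_zero_left, hb0, zero_add] at h3
      exact (mul_eq_zero.1 h3).resolve_right hσne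
    have hc0 : c = 0 := by
      have h4 := snoc_eq_self c
      rw [← h4, ← hc'def, hc'0, hγ0]
      funext i
      refine Fin.lastCases ?_ (fun j => ?_) i <;> simp
    have hFQ : F = Qset d P v := by
      rw [hFeq, hc0, hb0]
      ext x
      simp [dotp_zero_left]
    have : fdim F = d + 1 := by rw [hFQ]; exact fdim_Q hvP hPdim
    omega
  have hWle : d ≤ Module.finrank ℝ (vectorSpan ℝ G) + 1 := by
    obtain ⟨g₀, hg₀⟩ := hGne
    set W := (vectorSpan ℝ G).map (sl d) ⊔ (ℝ ∙ (α - sl d g₀)) with hWdef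
    have hFW : ∀ x ∈ F, x - sl d g₀ ∈ W := by
      intro x hx
      rcases hdecomp x hx with rfl | ⟨hlt, y, hyG, he⟩
      · exact Submodule.mem_sup_right (Submodule.mem_span_singleton_self _)
      · have hmem1 : sl d y - sl d g₀ ∈ (vectorSpan ℝ G).map (sl d) := by
          rw [← map_sub]
          exact ⟨y - g₀, by
            have := vsub_mem_vectorSpan ℝ hyG hg₀
            rwa [vsub_eq_sub] at this, rfl⟩
        obtain ⟨τ, hτeq⟩ : ∃ τ : ℝ, τ = σ * x (Fin.last d) := ⟨_, rfl⟩
        rw [← hτeq] at he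
        have hxd : x - sl d g₀ = τ • (α - sl d g₀) + (1 - τ) • (sl d y - sl d g₀) := by
          rw [he]; module
        rw [hxd]
        exact Submodule.add_mem _
          (Submodule.mem_sup_right (Submodule.smul_mem _ _
            (Submodule.mem_span_singleton_self _)))
          (Submodule.mem_sup_left (Submodule.smul_mem _ _ hmem1))
    have hvsF : vectorSpan ℝ F ≤ W := by
      rw [vectorSpan_def, Submodule.span_le]
      rintro z ⟨x₁, hx₁, x₂, hx₂, hz⟩
      have hz' : z = (x₁ - sl d g₀) - (x₂ - sl d g₀) := by
        rw [← hz]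
        show x₁ - x₂ = _
        abel
      rw [hz']
      exact SetLike.mem_coe.2 (Submodule.sub_mem _ (hFW _ hx₁) (hFW _ hx₂))
    have hz : α - sl d g₀ ≠ 0 := by
      intro h
      have h5 := congrFun h (Fin.last d)
      simp only [Pi.sub_apply, sl_last, Pi.zero_apply] at h5
      rw [hαl] at h5
      exact hσne (by linarith)
    have h6 := Submodule.finrank_sup_add_finrank_inf_eq
      ((vectorSpan ℝ G).map (sl d)) (ℝ ∙ (α - sl d g₀))
    have heqmap : Module.finrank ℝ ((vectorSpan ℝ G).map (sl d))
        = Module.finrank ℝ (vectorSpan ℝ G) :=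
      (LinearEquiv.finrank_eq (Submodule.equivMapOfInjective _ sl_inj _)).symm
    rw [finrank_span_singleton hz, heqmap, ← hWdef] at h6
    have h7 : Module.finrank ℝ (vectorSpan ℝ F) ≤ Module.finrank ℝ W :=
      Submodule.finrank_mono hvsF
    have h8 : Module.finrank ℝ W ≤ Module.finrank ℝ (vectorSpan ℝ G) + 1 := by omega
    have h9 : fdim F ≤ Module.finrank ℝ W := h7
    omega
  have hGdim : fdim G = d - 1 := by
    have hle := fdim_le G
    unfold fdim at *
    omega
  have hBbasis := hfacets G ⟨hGface, hGdim⟩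
  rw [hEeq]
  exact basis_extend hBbasis huZ hσ1

end FacetKey

lemma dotp_zero_right {n : ℕ} (c : Fin n → ℝ) : dotp c 0 = 0 := by simp [dotp]

lemma isLatticePt_zero {n : ℕ} : IsLatticePt (0 : Fin n → ℝ) := fun i => ⟨0, by simp⟩

/-- interior point forces a nonpositive functional to vanish -/
lemma dotp_zero_of_nonpos {n : ℕ} {P : Set (Fin n → ℝ)} {c' : Fin n → ℝ}
    (h0int : (0 : Fin n → ℝ) ∈ interior P) (hle : ∀ w ∈ P, dotp c' w ≤ 0) :
    c' = 0 := by
  obtain ⟨ε, hεpos, hball⟩ := Metric.mem_nhds_iff.1 (mem_interior_iff_mem_nhds.1 h0int)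
  set δ : ℝ := ε/(2*(1+‖c'‖)) with hδdef
  have hnorm : (0:ℝ) < 1 + ‖c'‖ := by positivity
  have hδpos : 0 < δ := by positivity
  have hmem : δ • c' ∈ P := by
    apply hball
    rw [Metric.mem_ball, dist_zero_right, norm_smul, Real.norm_of_nonneg (le_of_lt hδpos)]
    calc δ * ‖c'‖ < δ * (1 + ‖c'‖) := by nlinarith [norm_nonneg c']
    _ = ε / 2 := by
          rw [hδdef]
          field_simp
    _ < ε := by linarith
  have h1 := hle _ hmem
  rw [dotp_smul_right] at h1
  have h2 : dotp c' c' ≤ 0 := by nlinarith [dotp_self_nonneg c']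
  exact eq_zero_of_dotp_self (le_antisymm h2 (dotp_self_nonneg c'))

lemma snoc_zero_zero {n : ℕ} : (Fin.snoc (0 : Fin n → ℝ) (0:ℝ) : Fin (n+1) → ℝ) = 0 := by
  funext i
  refine Fin.lastCases ?_ (fun j => ?_) i <;> simp

/-- The smooth skew bipyramid `sbip(P,v) = conv((P×{0}) ∪ {−e_{d+1}, v̄+e_{d+1}})`
over a smooth Fano polytope `P` at a vertex `v` is a smooth Fano polytope. -/
theorem stmt12 {d : ℕ} (P : Set (Fin d → ℝ)) (hP : IsSmoothFano P)
    (v : Fin d → ℝ) (hv : v ∈ Set.extremePoints ℝ P) :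
    IsSmoothFano (convexHull ℝ
      ((fun x : Fin d → ℝ => Fin.snoc x (0 : ℝ)) '' P ∪
        {Fin.snoc (0 : Fin d → ℝ) (-1 : ℝ), Fin.snoc v (1 : ℝ)})) := by
  obtain ⟨hlat, h0int, hPdim, hfacets⟩ := hP
  have h0P : (0 : Fin d → ℝ) ∈ P := interior_subset h0int
  have hQclean : (fun x : Fin d → ℝ => Fin.snoc x (0 : ℝ)) '' P = ⇑(sl d) '' P := rfl
  obtain ⟨V, hVlat, hPeq⟩ := hlat
  have hconv : Convex ℝ P := by rw [hPeq]; exact convex_convexHull ℝ _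
  have hne : P.Nonempty := ⟨0, h0P⟩
  have hvP : v ∈ P := extremePoints_subset hv
  have hvZ : IsLatticePt v := by
    have hvV : v ∈ (V : Set (Fin d → ℝ)) := by
      rw [hPeq] at hv
      exact extremePoints_convexHull_subset hv
    exact hVlat v hvV
  have hdpos : 1 ≤ d := by
    by_contra hcon
    have hd0 : d = 0 := by omega
    subst hd0
    have hPface : IsFace P P := by
      refine ⟨0, 0, fun x _ => le_of_eq (by simp [dotp]), ?_⟩
      ext x
      simp [dotp]
    have hPfacet : IsFacet P P := ⟨hPface, by rw [hPdim]⟩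
    have hbasis := hfacets P hPfacet
    have h0ext : (0 : Fin 0 → ℝ) ∈ Set.extremePoints ℝ P := by
      rw [mem_extremePoints]
      refine ⟨h0P, fun x₁ _ x₂ _ _ => ⟨?_, ?_⟩⟩ <;> (funext i; exact i.elim0)
    exact hbasis.1.ne_zero ⟨0, h0ext⟩ rfl
  rw [hQclean]
  refine ⟨?_, zero_mem_interior_Q hne hconv h0int hvP, fdim_Q hvP hPdim, ?_⟩
  · -- lattice polytope
    classical
    refine ⟨V.image (fun x => Fin.snoc x (0:ℝ)) ∪
      {Fin.snoc (0 : Fin d → ℝ) (-1:ℝ), Fin.snoc v (1:ℝ)}, ?_, ?_⟩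
    · intro x hx
      rcases Finset.mem_union.1 hx with h | h
      · obtain ⟨w, hw, rfl⟩ := Finset.mem_image.1 h
        exact isLatticePt_snoc (hVlat w hw) ⟨0, by simp⟩
      · rcases Finset.mem_insert.1 h with rfl | h
        · exact isLatticePt_snoc isLatticePt_zero ⟨-1, by simp⟩
        · rw [Finset.mem_singleton] at h; subst h
          exact isLatticePt_snoc hvZ ⟨1, by simp⟩
    · rw [Finset.coe_union, Finset.coe_image, Finset.coe_insert, Finset.coe_singleton]
      conv_lhs => rw [hPeq]
      rw [(sl d).image_convexHull]
      rw [convexHull_convexHull_union_left]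
      rfl
  · -- facets of the bipyramid
    intro F hFt
    obtain ⟨⟨c, b, hbd', hFeq⟩, hFdim'⟩ := hFt
    have hFdim : fdim F = d := by omega
    have hmemF : ∀ x, x ∈ Qset d P v → dotp c x = b → x ∈ F := fun x h1 h2 => by
      rw [hFeq]; exact ⟨h1, h2⟩
    have hFval : ∀ x ∈ F, dotp c x = b := fun x hx => by rw [hFeq] at hx; exact hx.2
    have h0Q : (0 : Fin (d+1) → ℝ) ∈ Qset d P v := slP_subset_Q ⟨0, h0P, map_zero _⟩
    have hbnonneg : 0 ≤ b := by
      have := hbd' 0 h0Q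
      rwa [dotp_zero_right] at this
    have hc'bd : ∀ w ∈ P, dotp (Fin.init c) w ≤ b := by
      intro w hw
      have := hbd' (sl d w) (slP_subset_Q ⟨w, hw, rfl⟩)
      rwa [sl_apply, dotp_snoc, mul_zero, add_zero] at this
    have hnotboth : ¬ ((Fin.snoc (0 : Fin d → ℝ) (-1:ℝ) : Fin (d+1) → ℝ) ∈ F ∧
        (Fin.snoc v (1:ℝ) : Fin (d+1) → ℝ) ∈ F) := by
      rintro ⟨hAF, hBF⟩
      have hcA := hFval _ hAF
      have hcB := hFval _ hBF
      rw [dotp_snoc, dotp_zero_right, zero_add] at hcA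
      rw [dotp_snoc, mul_one] at hcB
      have hc'v : dotp (Fin.init c) v ≤ b := hc'bd v hvP
      have hb0 : b = 0 := by linarith
      have hγ0 : c (Fin.last d) = 0 := by linarith
      have hc'0 : Fin.init c = 0 := by
        apply dotp_zero_of_nonpos h0int
        intro w hw
        have := hc'bd w hw
        linarith
      have hc0 : c = 0 := by
        have h4 := snoc_eq_self c
        rw [hc'0, hγ0, snoc_zero_zero] at h4
        exact h4.symm
      have hFQ : F = Qset d P v := by
        rw [hFeq]
        ext x
        exact ⟨fun h => h.1, fun h => ⟨h, by rw [hc0, hb0, dotp_zero_left]⟩⟩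
      have : fdim F = d + 1 := by rw [hFQ]; exact fdim_Q hvP hPdim
      omega
    by_cases hBF : (Fin.snoc v (1:ℝ) : Fin (d+1) → ℝ) ∈ F
    · have hAnF : (Fin.snoc (0 : Fin d → ℝ) (-1:ℝ) : Fin (d+1) → ℝ) ∉ F :=
        fun hAF => hnotboth ⟨hAF, hBF⟩
      apply facet_key hne hconv h0P hvP hPdim hdpos hfacets hvZ hbd' hFeq hFdim
        (Or.inl ⟨rfl, rfl⟩) hBF
      intro x hx
      obtain ⟨s, t, p, hp, hs0, hs1, ht0, ht1, hxe, k1, k2, k3⟩ :=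
        decompF hne hconv hbd' hFeq hx
      have hs : s = 0 := by
        by_contra hss
        exact hAnF (k1 (lt_of_le_of_ne hs0 (Ne.symm hss)))
      have hxl : x (Fin.last d) = (1-s)*t - s := by rw [hxe]; exact last_coord_combo
      rw [hxl, hs]
      nlinarith
    · by_cases hAF : (Fin.snoc (0 : Fin d → ℝ) (-1:ℝ) : Fin (d+1) → ℝ) ∈ F
      · apply facet_key hne hconv h0P hvP hPdim hdpos hfacets isLatticePt_zero hbd' hFeq hFdim
          (Or.inr ⟨rfl, rfl⟩) hAF
        intro x hx
        obtain ⟨s, t, p, hp, hs0, hs1, ht0, ht1, hxe, k1, k2, k3⟩ :=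
          decompF hne hconv hbd' hFeq hx
        have ht' : (1-s)*t = 0 := by
          by_contra htt
          exact hBF (k2 (lt_of_le_of_ne (mul_nonneg (by linarith) ht0) (Ne.symm htt)))
        have hxl : x (Fin.last d) = (1-s)*t - s := by rw [hxe]; exact last_coord_combo
        rw [hxl, ht']
        nlinarith
      · exfalso
        have hFne : F.Nonempty := by
          by_contra hFe
          rw [Set.not_nonempty_iff_eq_empty] at hFe
          rw [hFe] at hFdim
          unfold fdim at hFdim
          rw [vectorSpan_empty, finrank_bot] at hFdim
          omega
        have hFsub : ∀ x ∈ F, ∃ y, (y ∈ P ∧ dotp (Fin.init c) y = b) ∧ x = sl d y := by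
          intro x hx
          obtain ⟨s, t, p, hp, hs0, hs1, ht0, ht1, hxe, k1, k2, k3⟩ :=
            decompF hne hconv hbd' hFeq hx
          have hs : s = 0 := by
            by_contra hss
            exact hAF (k1 (lt_of_le_of_ne hs0 (Ne.symm hss)))
          have ht' : (1-s)*t = 0 := by
            by_contra htt
            exact hBF (k2 (lt_of_le_of_ne (mul_nonneg (by linarith) ht0) (Ne.symm htt)))
          have hxl : x (Fin.last d) = 0 := by
            rw [hxe, last_coord_combo, ht', hs]
            ring
          obtain ⟨y, hy, hye⟩ := mem_last_zero hne hconv h0P hvP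
            (by rw [hFeq] at hx; exact hx.1) hxl
          refine ⟨y, ⟨hy, ?_⟩, hye⟩
          have hvx := hFval x hx
          rw [hye, sl_apply, dotp_snoc, mul_zero, add_zero] at hvx
          exact hvx
        have hFeqG : F = ⇑(sl d) '' {w ∈ P | dotp (Fin.init c) w = b} := by
          apply Set.Subset.antisymm
          · intro x hx
            obtain ⟨y, hy, hye⟩ := hFsub x hx
            exact ⟨y, hy, hye.symm⟩
          · rintro x ⟨w, hw, rfl⟩
            exact hmemF _ (slP_subset_Q ⟨w, hw.1, rfl⟩)
              (by rw [sl_apply, dotp_snoc, mul_zero, add_zero]; exact hw.2)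
        have hGdim : fdim {w ∈ P | dotp (Fin.init c) w = b} = d := by
          rw [← fdim_sl_image, ← hFeqG]
          exact hFdim
        have hGtop : vectorSpan ℝ {w ∈ P | dotp (Fin.init c) w = b} = ⊤ :=
          Submodule.eq_top_of_finrank_eq (by rw [Module.finrank_fin_fun]; exact hGdim)
        have hc'0 : Fin.init c = 0 := dotp_eq_zero_on_top hGtop
          (fun g₁ h₁ g₂ h₂ => by rw [h₁.2, h₂.2])
        have hb0 : b = 0 := by
          obtain ⟨x, hx⟩ := hFne
          obtain ⟨y, hy, _⟩ := hFsub x hx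
          have h5 := hy.2
          rw [hc'0, dotp_zero_left] at h5
          exact h5.symm
        have hγle : c (Fin.last d) ≤ 0 := by
          have := hbd' _ (apos_mem_Q (v := v))
          rwa [dotp_snoc, hc'0, dotp_zero_left, zero_add, mul_one, hb0] at this
        have hγge : 0 ≤ c (Fin.last d) := by
          have := hbd' _ (aneg_mem_Q (v := v) (P := P))
          rw [dotp_snoc, hc'0, dotp_zero_left, zero_add, hb0] at this
          linarith
        have hγ0 : c (Fin.last d) = 0 := le_antisymm hγle hγge
        have hc0 : c = 0 := by
          have h4 := snoc_eq_self c
          rw [hc'0, hγ0, snoc_zero_zero] at h4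
          exact h4.symm
        exact hBF (hmemF _ (apos_mem_Q) (by rw [hc0, dotp_zero_left, hb0]))
end
end

section
/- Let P ⊆ ℝ^d be a smooth Fano polytope. Then the bipyramid conv((P × {0}) ∪ {−e_{d+1}, e_{d+1}}) ⊆ ℝ^{d+1} is a smooth Fano polytope. -/
open Set

noncomputable section

namespace Bipyr

variable {d : ℕ}


variable {d : ℕ}

/-- `x ↦ Fin.snoc x 0` as a linear map. -/
def L (d : ℕ) : (Fin d → ℝ) →ₗ[ℝ] (Fin (d + 1) → ℝ) where
  toFun x := Fin.snoc x 0
  map_add' x y := by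
    funext i
    refine Fin.lastCases ?_ (fun j => ?_) i <;> simp
  map_smul' r x := by
    funext i
    refine Fin.lastCases ?_ (fun j => ?_) i <;> simp

@[simp] lemma L_castSucc (x : Fin d → ℝ) (j : Fin d) : L d x j.castSucc = x j := by
  simp [L]

@[simp] lemma L_last (x : Fin d → ℝ) : L d x (Fin.last d) = 0 := by
  simp [L]

lemma L_inj : Function.Injective (L d) := by
  intro x y h
  funext j
  have := congrFun h j.castSucc
  simpa using this

/-- `ep s = (0, …, 0, s)`. -/
def ep (d : ℕ) (s : ℝ) : Fin (d + 1) → ℝ := Fin.snoc 0 s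

@[simp] lemma ep_castSucc (s : ℝ) (j : Fin d) : ep d s j.castSucc = 0 := by
  simp [ep]

@[simp] lemma ep_last (s : ℝ) : ep d s (Fin.last d) = s := by
  simp [ep]

/-- `dotp v` as a linear map. -/
def dotL {n : ℕ} (v : Fin n → ℝ) : (Fin n → ℝ) →ₗ[ℝ] ℝ where
  toFun x := dotp v x
  map_add' x y := by simp [dotp, mul_add, Finset.sum_add_distrib]
  map_smul' r x := by simp [dotp, Finset.mul_sum, mul_left_comm]

@[simp] lemma dotL_apply {n : ℕ} (v x : Fin n → ℝ) : dotL v x = dotp v x := rfl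

lemma dotp_snoc (c : Fin (d + 1) → ℝ) (x : Fin d → ℝ) (t : ℝ) :
    dotp c (Fin.snoc x t) = dotp (Fin.init c) x + c (Fin.last d) * t := by
  simp [dotp, Fin.sum_univ_castSucc, Fin.init]

lemma dotp_L (c : Fin (d + 1) → ℝ) (x : Fin d → ℝ) :
    dotp c (L d x) = dotp (Fin.init c) x := by
  have : (L d x) = Fin.snoc x 0 := rfl
  rw [this, dotp_snoc]; ring

lemma dotp_ep (c : Fin (d + 1) → ℝ) (s : ℝ) :
    dotp c (ep d s) = c (Fin.last d) * s := by
  rw [ep, dotp_snoc]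
  simp [dotp]

/-- the last coordinate, as a linear map -/
def lst (d : ℕ) : (Fin (d + 1) → ℝ) →ₗ[ℝ] ℝ := LinearMap.proj (Fin.last d)

@[simp] lemma lst_apply (z : Fin (d + 1) → ℝ) : lst d z = z (Fin.last d) := rfl

/-- The set of lattice points as a `ℤ`-submodule. -/
def LPsub (n : ℕ) : Submodule ℤ (Fin n → ℝ) where
  carrier := {x | IsLatticePt x}
  add_mem' := by
    rintro x y hx hy i
    obtain ⟨a, ha⟩ := hx i; obtain ⟨b, hb⟩ := hy i
    exact ⟨a + b, by simp [ha, hb]⟩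
  zero_mem' := fun i => ⟨0, by simp⟩
  smul_mem' := by
    rintro n x hx i
    obtain ⟨a, ha⟩ := hx i
    exact ⟨n * a, by simp [ha]⟩

lemma mem_latticeSubmodule_iff {n : ℕ} (x : Fin n → ℝ) :
    x ∈ latticeSubmodule n ↔ IsLatticePt x := by
  have : latticeSubmodule n = LPsub n := Submodule.span_eq (LPsub n)
  rw [this]; rfl


def Qset (d : ℕ) (P : Set (Fin d → ℝ)) : Set (Fin (d + 1) → ℝ) :=
  (fun x : Fin d → ℝ => Fin.snoc x (0 : ℝ)) '' P ∪ {ep d (-1), ep d 1}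

lemma L_image (P : Set (Fin d → ℝ)) :
    (fun x : Fin d → ℝ => Fin.snoc x (0 : ℝ)) '' P = L d '' P := rfl

variable {P : Set (Fin d → ℝ)}

lemma mem_Q (hconv : Convex ℝ P) (h0 : (0 : Fin d → ℝ) ∈ P) {z : Fin (d + 1) → ℝ}
    (hz : z ∈ convexHull ℝ (Qset d P)) :
    ∃ p ∈ P, ∃ α β : ℝ, 0 ≤ α ∧ 0 ≤ β ∧ α + β ≤ 1 ∧
      z = (1 - α - β) • L d p + α • ep d 1 + β • ep d (-1) := by
  have hA : Convex ℝ (L d '' P) := hconv.linear_image _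
  have hAne : (L d '' P).Nonempty := ⟨L d 0, mem_image_of_mem _ h0⟩
  have hset : Qset d P = insert (ep d (-1)) (insert (ep d 1) (L d '' P)) := by
    rw [Qset, L_image]
    ext w
    simp only [mem_union, mem_insert_iff, mem_singleton_iff]
    tauto
  rw [hset, convexHull_insert (insert_nonempty _ _), mem_convexJoin] at hz
  obtain ⟨em, hem, w, hw, hzw⟩ := hz
  rw [mem_singleton_iff] at hem; subst hem
  rw [convexHull_insert hAne, mem_convexJoin] at hw
  obtain ⟨epl, hepl, a, ha, hwa⟩ := hw
  rw [mem_singleton_iff] at hepl; subst hepl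
  rw [hA.convexHull_eq] at ha
  obtain ⟨p, hp, rfl⟩ := ha
  obtain ⟨β, bb, hβ, hbb, hs1, rfl⟩ := hzw
  obtain ⟨αa, ga, hαa, hga, hs2, rfl⟩ := hwa
  refine ⟨p, hp, bb * αa, β, by positivity, hβ, by nlinarith, ?_⟩
  have h1 : 1 - bb * αa - β = bb * ga := by nlinarith
  rw [h1]
  module

lemma mem_Q_L (p : Fin d → ℝ) (hp : p ∈ P) : L d p ∈ convexHull ℝ (Qset d P) :=
  subset_convexHull ℝ _ (Or.inl ⟨p, hp, rfl⟩)

lemma mem_Q_ep {s : ℝ} (hs : s = 1 ∨ s = -1) : ep d s ∈ convexHull ℝ (Qset d P) := by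
  apply subset_convexHull ℝ _
  rcases hs with rfl | rfl
  · exact Or.inr (Or.inr rfl)
  · exact Or.inr (Or.inl rfl)

lemma lst_decomp (p : Fin d → ℝ) (α β : ℝ) :
    ((1 - α - β) • L d p + α • ep d 1 + β • ep d (-1)) (Fin.last d) = α - β := by
  simp [Pi.add_apply]
  ring

lemma eq_ep_of_lst (hconv : Convex ℝ P) (h0 : (0 : Fin d → ℝ) ∈ P) {s : ℝ}
    (hs : s = 1 ∨ s = -1) {z : Fin (d + 1) → ℝ} (hz : z ∈ convexHull ℝ (Qset d P))
    (hlast : z (Fin.last d) = s) : z = ep d s := by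
  obtain ⟨p, hp, α, β, hα, hβ, hαβ, heq⟩ := mem_Q hconv h0 hz
  have hl : α - β = s := by rw [heq, lst_decomp] at hlast; exact hlast
  rcases hs with rfl | rfl
  · have hα1 : α = 1 := by linarith
    have hβ0 : β = 0 := by linarith
    rw [heq, hα1, hβ0]
    simp
  · have hβ1 : β = 1 := by linarith
    have hα0 : α = 0 := by linarith
    rw [heq, hβ1, hα0]
    simp


lemma fdim_convexHull {n : ℕ} (T : Set (Fin n → ℝ)) : fdim (convexHull ℝ T) = fdim T := by
  unfold fdim
  rw [← direction_affineSpan, affineSpan_convexHull, direction_affineSpan]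

lemma vectorSpan_le_ker {n : ℕ} (f : (Fin n → ℝ) →ₗ[ℝ] ℝ) {T : Set (Fin n → ℝ)} {r : ℝ}
    (h : ∀ z ∈ T, f z = r) : vectorSpan ℝ T ≤ LinearMap.ker f := by
  rw [vectorSpan_def, Submodule.span_le]
  rintro w hw
  rw [Set.mem_vsub] at hw
  obtain ⟨a, ha, b, hb, rfl⟩ := hw
  simp only [SetLike.mem_coe, LinearMap.mem_ker, vsub_eq_sub, map_sub, h a ha, h b hb, sub_self]

lemma ker_lst : LinearMap.ker (lst d) = LinearMap.range (L d) := by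
  ext z
  simp only [LinearMap.mem_ker, LinearMap.mem_range, lst_apply]
  constructor
  · intro h
    refine ⟨Fin.init z, ?_⟩
    funext i
    refine Fin.lastCases ?_ (fun j => ?_) i
    · simpa using h.symm
    · simp [Fin.init]
  · rintro ⟨x, rfl⟩; simp

lemma finrank_ker_lst : Module.finrank ℝ (LinearMap.ker (lst d)) = d := by
  rw [ker_lst, LinearMap.finrank_range_of_inj L_inj, Module.finrank_fin_fun]

lemma vectorSpan_image {n m : ℕ} (f : (Fin n → ℝ) →ₗ[ℝ] (Fin m → ℝ)) (S : Set (Fin n → ℝ)) :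
    vectorSpan ℝ (f '' S) = Submodule.map f (vectorSpan ℝ S) := by
  rw [vectorSpan_def, vectorSpan_def, Submodule.map_span]
  congr 1
  ext w
  constructor
  · rintro ⟨a, ⟨x, hx, rfl⟩, b, ⟨y, hy, rfl⟩, rfl⟩
    exact ⟨x - y, Set.vsub_mem_vsub hx hy, by simp [vsub_eq_sub, map_sub]⟩
  · rintro ⟨v, hv, rfl⟩
    rw [Set.mem_vsub] at hv
    obtain ⟨x, hx, y, hy, rfl⟩ := hv
    exact ⟨f x, ⟨x, hx, rfl⟩, f y, ⟨y, hy, rfl⟩, by simp [vsub_eq_sub, map_sub]⟩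

lemma fdim_image_L (S : Set (Fin d → ℝ)) : fdim (L d '' S) = fdim S := by
  unfold fdim
  rw [vectorSpan_image]
  exact (Submodule.equivMapOfInjective _ L_inj _).finrank_eq.symm

lemma K_le_ker {G : Set (Fin d → ℝ)} : vectorSpan ℝ (L d '' G) ≤ LinearMap.ker (lst d) := by
  apply vectorSpan_le_ker (r := 0)
  rintro z ⟨x, hx, rfl⟩
  simp

lemma fdim_union_ep {G : Set (Fin d → ℝ)} {g0 : Fin d → ℝ} (hg0 : g0 ∈ G) {s : ℝ}
    (hs : s ≠ 0) : fdim (L d '' G ∪ {ep d s}) = fdim G + 1 := by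
  classical
  have hg0' : L d g0 ∈ L d '' G ∪ {ep d s} := Or.inl ⟨g0, hg0, rfl⟩
  have hvs : vectorSpan ℝ (L d '' G ∪ {ep d s}) =
      vectorSpan ℝ (L d '' G) ⊔ Submodule.span ℝ {ep d s -ᵥ L d g0} := by
    rw [vectorSpan_eq_span_vsub_set_right ℝ hg0', Set.image_union, Set.image_singleton,
      Submodule.span_union, vectorSpan_eq_span_vsub_set_right ℝ (Set.mem_image_of_mem _ hg0)]
  set K := vectorSpan ℝ (L d '' G) with hK
  set u := ep d s -ᵥ L d g0 with hu
  have hlstu : lst d u = s := by simp [hu, vsub_eq_sub]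
  have hune : u ≠ 0 := by
    intro h; rw [h, map_zero] at hlstu; exact hs hlstu.symm
  have hinf : K ⊓ Submodule.span ℝ {u} = ⊥ := by
    rw [Submodule.eq_bot_iff]
    intro x hx
    rw [Submodule.mem_inf] at hx
    obtain ⟨hxK, hxu⟩ := hx
    rw [Submodule.mem_span_singleton] at hxu
    obtain ⟨r, rfl⟩ := hxu
    have : lst d (r • u) = 0 := by
      have := K_le_ker hxK
      rwa [LinearMap.mem_ker] at this
    rw [map_smul, hlstu, smul_eq_mul] at this
    have : r = 0 := by
      rcases mul_eq_zero.mp this with h | h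
      · exact h
      · exact absurd h hs
    rw [this, zero_smul]
  have hfin := Submodule.finrank_sup_add_finrank_inf_eq K (Submodule.span ℝ {u})
  rw [hinf, finrank_span_singleton hune] at hfin
  simp only [finrank_bot, add_zero] at hfin
  unfold fdim
  rw [hvs, hfin, hK, vectorSpan_image]
  congr 1
  exact (Submodule.equivMapOfInjective _ L_inj _).finrank_eq.symm

lemma ball_subset_Q (hconv : Convex ℝ P) {ε : ℝ} (hε : 0 < ε)
    (hball : Metric.ball (0 : Fin d → ℝ) ε ⊆ P) :
    Metric.ball (0 : Fin (d + 1) → ℝ) (min (ε / 2) (1 / 2)) ⊆ convexHull ℝ (Qset d P) := by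
  intro z hz
  set δ := min (ε / 2) (1 / 2) with hδ
  rw [Metric.mem_ball, dist_zero_right] at hz
  set t := z (Fin.last d) with htdef
  have ht : |t| ≤ ‖z‖ := by simpa using norm_le_pi_norm z (Fin.last d)
  have hδhalf : δ ≤ 1 / 2 := min_le_right _ _
  have hδε : δ ≤ ε / 2 := min_le_left _ _
  have ht2 : |t| < 1 / 2 := lt_of_le_of_lt ht (lt_of_lt_of_le hz hδhalf)
  have hpos : (0 : ℝ) < 1 - |t| := by linarith
  set p := (1 - |t|)⁻¹ • Fin.init z with hp
  have hpP : p ∈ P := by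
    apply hball
    rw [Metric.mem_ball, dist_zero_right, hp, norm_smul]
    have hinit : ‖Fin.init z‖ ≤ ‖z‖ := by
      refine (pi_norm_le_iff_of_nonneg (norm_nonneg z)).2 fun i => ?_
      exact norm_le_pi_norm z i.castSucc
    have hinv : ‖(1 - |t|)⁻¹‖ ≤ 2 := by
      rw [Real.norm_eq_abs, abs_of_pos (inv_pos.2 hpos)]
      rw [inv_le_comm₀ hpos (by norm_num)]
      linarith
    have h1 : ‖(1 - |t|)⁻¹‖ * ‖Fin.init z‖ ≤ 2 * ‖z‖ := by
      apply mul_le_mul hinv hinit (norm_nonneg _) (by norm_num)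
    have h2 : 2 * ‖z‖ < ε := by
      have := lt_of_lt_of_le hz hδε
      linarith
    linarith
  set s : ℝ := if 0 ≤ t then 1 else -1 with hs
  have hzeq : z = (1 - |t|) • L d p + |t| • ep d s := by
    funext i
    refine Fin.lastCases ?_ (fun j => ?_) i
    · simp only [Pi.add_apply, Pi.smul_apply, L_last, ep_last, smul_eq_mul, mul_zero, zero_add]
      rw [hs]
      split_ifs with h
      · rw [abs_of_nonneg h]; ring
      · rw [abs_of_neg (not_le.1 h)]; ring
    · have hpj : p j = (1 - |t|)⁻¹ * Fin.init z j := rfl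
      simp only [Pi.add_apply, Pi.smul_apply, L_castSucc, ep_castSucc, smul_eq_mul, mul_zero,
        add_zero, hpj]
      rw [← mul_assoc, mul_inv_cancel₀ hpos.ne', one_mul]
      rfl
  have hLp : L d p ∈ Qset d P := Or.inl ⟨p, hpP, rfl⟩
  have heps : ep d s ∈ Qset d P := by
    rw [hs]
    split_ifs
    · exact Or.inr (Or.inr rfl)
    · exact Or.inr (Or.inl rfl)
  apply segment_subset_convexHull hLp heps
  exact ⟨1 - |t|, |t|, by linarith, abs_nonneg t, by ring, hzeq.symm⟩

lemma interior_Q (hconv : Convex ℝ P) (hint : (0 : Fin d → ℝ) ∈ interior P) :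
    (0 : Fin (d + 1) → ℝ) ∈ interior (convexHull ℝ (Qset d P)) := by
  obtain ⟨ε, hε, hball⟩ := Metric.mem_nhds_iff.1 (mem_interior_iff_mem_nhds.1 hint)
  have hδ : (0 : ℝ) < min (ε / 2) (1 / 2) := by positivity
  exact mem_interior.2 ⟨_, ball_subset_Q hconv hε hball, Metric.isOpen_ball,
    Metric.mem_ball_self hδ⟩

lemma fdim_Q (hconv : Convex ℝ P) (hint : (0 : Fin d → ℝ) ∈ interior P) :
    fdim (convexHull ℝ (Qset d P)) = d + 1 := by
  classical
  obtain ⟨ε, hε, hball⟩ := Metric.mem_nhds_iff.1 (mem_interior_iff_mem_nhds.1 hint)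
  have hδ : (0 : ℝ) < min (ε / 2) (1 / 2) := by positivity
  set δ := min (ε / 2) (1 / 2) with hδdef
  have hsub := ball_subset_Q hconv hε hball
  have h0Q : (0 : Fin (d + 1) → ℝ) ∈ convexHull ℝ (Qset d P) :=
    hsub (Metric.mem_ball_self hδ)
  have hsingle : ∀ i : Fin (d + 1), Pi.single i (1 : ℝ) ∈
      vectorSpan ℝ (convexHull ℝ (Qset d P)) := by
    intro i
    have hmem : (δ / 2) • (Pi.single i (1 : ℝ) : Fin (d + 1) → ℝ) ∈ convexHull ℝ (Qset d P) := by
      apply hsub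
      rw [Metric.mem_ball, dist_zero_right, norm_smul, Pi.norm_single, norm_one, mul_one,
        Real.norm_eq_abs, abs_of_pos (by positivity)]
      linarith [min_le_right (ε / 2) (1 / 2)]
    have hv : (δ / 2) • (Pi.single i (1 : ℝ) : Fin (d + 1) → ℝ) - 0 ∈
        vectorSpan ℝ (convexHull ℝ (Qset d P)) := by
      have := vsub_mem_vectorSpan ℝ hmem h0Q
      simpa [vsub_eq_sub] using this
    have := Submodule.smul_mem _ (2 / δ) (by simpa using hv)
    rwa [smul_smul, div_mul_div_comm, mul_comm, div_self (by positivity), one_smul] at this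
  have htop : vectorSpan ℝ (convexHull ℝ (Qset d P)) = ⊤ := by
    refine le_antisymm le_top ?_
    rw [← (Pi.basisFun ℝ (Fin (d + 1))).span_eq, Submodule.span_le]
    rintro v ⟨i, rfl⟩
    rw [Pi.basisFun_apply]
    exact hsingle i
  unfold fdim
  rw [htop, finrank_top, Module.finrank_fin_fun]

lemma dotp_single {n : ℕ} (v : Fin n → ℝ) (i : Fin n) (t : ℝ) :
    dotp v (Pi.single i t) = v i * t := by
  simp [dotp, Pi.single_apply, mul_ite, Finset.sum_ite_eq']

lemma dotp_zero {n : ℕ} (v : Fin n → ℝ) : dotp v 0 = 0 := by simp [dotp]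

lemma dotp_zero_left {n : ℕ} (x : Fin n → ℝ) : dotp 0 x = 0 := by simp [dotp]

lemma combo_attains {γ α β a u v b : ℝ} (hγ : 0 ≤ γ) (hα : 0 ≤ α) (hβ : 0 ≤ β)
    (hsum : γ + α + β = 1) (ha : a ≤ b) (hu : u ≤ b) (hv : v ≤ b)
    (heq : γ * a + α * u + β * v = b) :
    (0 < γ → a = b) ∧ (0 < α → u = b) ∧ (0 < β → v = b) := by
  have hkey : γ * (b - a) + α * (b - u) + β * (b - v) = 0 := by
    linear_combination b * hsum - heq
  refine ⟨fun h => le_antisymm ha ?_, fun h => le_antisymm hu ?_, fun h => le_antisymm hv ?_⟩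
  · nlinarith [mul_nonneg hα (sub_nonneg.2 hu), mul_nonneg hβ (sub_nonneg.2 hv)]
  · nlinarith [mul_nonneg hγ (sub_nonneg.2 ha), mul_nonneg hβ (sub_nonneg.2 hv)]
  · nlinarith [mul_nonneg hγ (sub_nonneg.2 ha), mul_nonneg hα (sub_nonneg.2 hu)]

lemma dotp_combo (c : Fin (d + 1) → ℝ) (p : Fin d → ℝ) (α β : ℝ) :
    dotp c ((1 - α - β) • L d p + α • ep d 1 + β • ep d (-1)) =
      (1 - α - β) * dotp (Fin.init c) p + α * (c (Fin.last d) * 1)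
        + β * (c (Fin.last d) * (-1)) := by
  rw [← dotL_apply, map_add, map_add, map_smul, map_smul, map_smul]
  simp only [smul_eq_mul, dotL_apply, dotp_L, dotp_ep]

lemma c_init_zero {P : Set (Fin d → ℝ)} {c' : Fin d → ℝ}
    (hint : (0 : Fin d → ℝ) ∈ interior P)
    (hle : ∀ x ∈ P, dotp c' x ≤ 0) : c' = 0 := by
  obtain ⟨ε, hε, hball⟩ := Metric.mem_nhds_iff.1 (mem_interior_iff_mem_nhds.1 hint)
  funext i
  have hmem : ∀ t : ℝ, |t| < ε → (Pi.single i t : Fin d → ℝ) ∈ P := by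
    intro t ht
    apply hball
    rw [Metric.mem_ball, dist_zero_right, Pi.norm_single, Real.norm_eq_abs]
    exact ht
  have h1 := hle _ (hmem (ε / 2) (by rw [abs_of_pos (by positivity)]; linarith))
  have h2 := hle _ (hmem (-(ε / 2)) (by rw [abs_of_neg (by linarith)]; linarith))
  rw [dotp_single] at h1 h2
  have h3 : c' i * (ε / 2) = 0 := by nlinarith
  rcases mul_eq_zero.1 h3 with h | h
  · exact h
  · exfalso; linarith

theorem facet_basis {P : Set (Fin d → ℝ)} (hd : 1 ≤ d)
    (hconv : Convex ℝ P) (hint : (0 : Fin d → ℝ) ∈ interior P)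
    (hfacets : ∀ G, IsFacet P G → IsLatticeBasisSet (Set.extremePoints ℝ G))
    {F : Set (Fin (d + 1) → ℝ)} (hF : IsFacet (convexHull ℝ (Qset d P)) F) :
    IsLatticeBasisSet (Set.extremePoints ℝ F) := by
  classical
  have h0P : (0 : Fin d → ℝ) ∈ P := interior_subset hint
  set Q := convexHull ℝ (Qset d P) with hQdef
  obtain ⟨⟨c, b, hval, hFeq⟩, hFdim⟩ := hF
  have hFdim' : fdim F = d := by simpa using hFdim
  have hQdim : fdim Q = d + 1 := fdim_Q hconv hint
  have hep1Q : ep d 1 ∈ Q := mem_Q_ep (Or.inl rfl)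
  have hepmQ : ep d (-1) ∈ Q := mem_Q_ep (Or.inr rfl)
  -- eliminate the case where both apexes are in F
  have hnotboth : ¬(ep d 1 ∈ F ∧ ep d (-1) ∈ F) := by
    rintro ⟨h1, h2⟩
    rw [hFeq] at h1 h2
    have hce1 : c (Fin.last d) * 1 = b := by rw [← dotp_ep]; exact h1.2
    have hce2 : c (Fin.last d) * (-1) = b := by rw [← dotp_ep]; exact h2.2
    have hb0 : b = 0 := by linarith
    have hc' : Fin.init c = 0 := by
      apply c_init_zero hint
      intro x hx
      rw [← dotp_L, ← hb0]
      exact hval _ (mem_Q_L x hx)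
    have hc : c = 0 := by
      funext i
      refine Fin.lastCases ?_ (fun j => ?_) i
      · show c (Fin.last d) = 0; linarith
      · exact congrFun hc' j
    have hFQ' : F = Q := by
      rw [hFeq, hc, hb0]
      ext z
      simp [dotp_zero_left]
    rw [hFQ', hQdim] at hFdim'
    omega
  -- eliminate the case where no apex is in F
  have hnotnone : ¬(ep d 1 ∉ F ∧ ep d (-1) ∉ F) := by
    rintro ⟨h1, h2⟩
    have hlt1 : dotp c (ep d 1) < b := by
      rcases lt_or_eq_of_le (hval _ hep1Q) with h | h
      · exact h
      · exact absurd (by rw [hFeq]; exact ⟨hep1Q, h⟩) h1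
    have hlt2 : dotp c (ep d (-1)) < b := by
      rcases lt_or_eq_of_le (hval _ hepmQ) with h | h
      · exact h
      · exact absurd (by rw [hFeq]; exact ⟨hepmQ, h⟩) h2
    rw [dotp_ep] at hlt1 hlt2
    have hzero : ∀ z ∈ F, lst d z = 0 := by
      intro z hz
      rw [hFeq] at hz
      obtain ⟨hzQ, hzb⟩ := hz
      obtain ⟨p, hp, α, β, hα, hβ, hαβ, heqz⟩ := mem_Q hconv h0P hzQ
      rw [heqz, dotp_combo] at hzb
      have hattain := combo_attains (by linarith) hα hβ (by ring)
        (by rw [← dotp_L]; exact hval _ (mem_Q_L p hp))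
        (le_of_lt hlt1) (le_of_lt hlt2) hzb
      have hα0 : α = 0 := by
        by_contra h
        have := hattain.2.1 (lt_of_le_of_ne hα (Ne.symm h))
        linarith
      have hβ0 : β = 0 := by
        by_contra h
        have := hattain.2.2 (lt_of_le_of_ne hβ (Ne.symm h))
        linarith
      rw [lst_apply, heqz, lst_decomp, hα0, hβ0, sub_zero]
    have hFne : F.Nonempty := by
      rcases Set.eq_empty_or_nonempty F with rfl | h
      · exfalso
        rw [fdim, vectorSpan_empty, finrank_bot] at hFdim'
        omega
      · exact h
    obtain ⟨z0, hz0⟩ := hFne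
    have hvsker : vectorSpan ℝ F ≤ LinearMap.ker (lst d) := vectorSpan_le_ker _ hzero
    have hvseq : vectorSpan ℝ F = LinearMap.ker (lst d) := by
      apply Submodule.eq_of_le_of_finrank_le hvsker
      rw [finrank_ker_lst]
      rw [fdim] at hFdim'
      omega
    have hvsc : vectorSpan ℝ F ≤ LinearMap.ker (dotL c) := by
      apply vectorSpan_le_ker (r := b)
      intro z hz
      rw [hFeq] at hz
      exact hz.2
    have hL0 : L d 0 -ᵥ z0 ∈ LinearMap.ker (lst d) := by
      rw [LinearMap.mem_ker, vsub_eq_sub, map_sub]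
      have h1 : lst d (L d 0) = 0 := by simp
      rw [h1, hzero z0 hz0, sub_zero]
    have hdc : dotL c (L d 0 -ᵥ z0) = 0 := by
      have := hvsc (hvseq ▸ hL0)
      rwa [LinearMap.mem_ker] at this
    rw [vsub_eq_sub, map_sub] at hdc
    have hz0b : dotp c z0 = b := by rw [hFeq] at hz0; exact hz0.2
    have h00 : dotp c (L d 0) = 0 := by rw [dotp_L, dotp_zero]
    simp only [dotL_apply, h00, hz0b] at hdc
    linarith
  -- now exactly one apex is in F
  obtain ⟨s, hs1, hin, hout⟩ : ∃ s : ℝ, (s = 1 ∨ s = -1) ∧ ep d s ∈ F ∧ ep d (-s) ∉ F := by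
    by_cases h1 : ep d 1 ∈ F <;> by_cases h2 : ep d (-1) ∈ F
    · exact absurd ⟨h1, h2⟩ hnotboth
    · exact ⟨1, Or.inl rfl, h1, h2⟩
    · refine ⟨-1, Or.inr rfl, h2, ?_⟩
      rw [neg_neg]
      exact h1
    · exact absurd ⟨h1, h2⟩ hnotnone
  have hsne : s ≠ 0 := by rcases hs1 with rfl | rfl <;> norm_num
  have hsQ : ep d s ∈ Q := mem_Q_ep hs1
  have hmsQ : ep d (-s) ∈ Q := by
    rcases hs1 with rfl | rfl
    · exact hepmQ
    · rw [neg_neg]; exact hep1Q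
  have hbs : c (Fin.last d) * s = b := by
    rw [← dotp_ep]
    rw [hFeq] at hin
    exact hin.2
  have hbo : dotp c (ep d (-s)) < b := by
    rcases lt_or_eq_of_le (hval _ hmsQ) with h | h
    · exact h
    · exact absurd (by rw [hFeq]; exact ⟨hmsQ, h⟩) hout
  have hbo' : -b < b := by
    rw [dotp_ep] at hbo
    calc -b = c (Fin.last d) * (-s) := by rw [← hbs]; ring
    _ < b := hbo
  have hbpos : 0 < b := by linarith
  set G := {x ∈ P | dotp (Fin.init c) x = b} with hGdef
  have hGface : IsFace P G :=
    ⟨Fin.init c, b, fun x hx => by rw [← dotp_L]; exact hval _ (mem_Q_L x hx), hGdef⟩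
  have hGF : ∀ g ∈ G, L d g ∈ F := by
    intro g hg
    rw [hFeq]
    exact ⟨mem_Q_L g hg.1, by rw [dotp_L]; exact hg.2⟩
  have hFconv : Convex ℝ F := by
    rw [hFeq]
    have h : {z ∈ Q | dotp c z = b} = Q ∩ {z | dotL c z = b} := rfl
    rw [h, hQdef]
    exact (convex_convexHull ℝ _).inter (convex_hyperplane (dotL c).isLinear b)
  -- decomposition of points of F
  have hFdecomp : ∀ z ∈ F, ∃ p ∈ P, ∃ w : ℝ, 0 ≤ w ∧ w ≤ 1 ∧
      z = (1 - w) • L d p + w • ep d s ∧ (w < 1 → p ∈ G) := by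
    intro z hz
    rw [hFeq] at hz
    obtain ⟨hzQ, hzb⟩ := hz
    obtain ⟨p, hp, α, β, hα, hβ, hαβ, heqz⟩ := mem_Q hconv h0P hzQ
    rw [heqz, dotp_combo] at hzb
    have ha : dotp (Fin.init c) p ≤ b := by
      rw [← dotp_L]; exact hval _ (mem_Q_L p hp)
    have hu : c (Fin.last d) * 1 ≤ b := by rw [← dotp_ep]; exact hval _ hep1Q
    have hv : c (Fin.last d) * (-1) ≤ b := by rw [← dotp_ep]; exact hval _ hepmQ
    have hattain := combo_attains (by linarith) hα hβ (by ring) ha hu hv hzb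
    rcases hs1 with rfl | rfl
    · -- s = 1 : the weight β on ep (-1) must vanish
      have hv' : c (Fin.last d) * (-1) < b := by
        rw [dotp_ep] at hbo
        calc c (Fin.last d) * (-1) = c (Fin.last d) * (-(1 : ℝ)) := by norm_num
        _ < b := hbo
      have hβ0 : β = 0 := by
        by_contra h
        have := hattain.2.2 (lt_of_le_of_ne hβ (Ne.symm h))
        linarith
      refine ⟨p, hp, α, hα, by linarith, ?_, ?_⟩
      · rw [heqz, hβ0]
        simp
      · intro hw
        refine ⟨hp, ?_⟩
        have := hattain.1 (by linarith)
        exact this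
    · -- s = -1 : the weight α on ep 1 must vanish
      have hu' : c (Fin.last d) * 1 < b := by
        rw [dotp_ep, neg_neg] at hbo
        calc c (Fin.last d) * 1 = c (Fin.last d) * (1 : ℝ) := rfl
        _ < b := hbo
      have hα0 : α = 0 := by
        by_contra h
        have := hattain.2.1 (lt_of_le_of_ne hα (Ne.symm h))
        linarith
      refine ⟨p, hp, β, hβ, by linarith, ?_, ?_⟩
      · rw [heqz, hα0]
        simp
      · intro hw
        refine ⟨hp, ?_⟩
        have := hattain.1 (by linarith)
        exact this
  have hGne : G.Nonempty := by
    by_contra h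
    rw [Set.not_nonempty_iff_eq_empty] at h
    have hFsub : F ⊆ {ep d s} := by
      intro z hz
      obtain ⟨p, hp, w, hw0, hw1, heqz, hwG⟩ := hFdecomp z hz
      rcases lt_or_eq_of_le hw1 with hlt | heq1
      · exact absurd (hwG hlt) (by rw [h]; exact Set.notMem_empty p)
      · rw [mem_singleton_iff, heqz, heq1]
        simp
    have hle : vectorSpan ℝ F ≤ ⊥ := by
      have := vectorSpan_mono ℝ hFsub
      rwa [vectorSpan_singleton] at this
    rw [le_bot_iff] at hle
    rw [fdim, hle, finrank_bot] at hFdim'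
    omega
  obtain ⟨g0, hg0⟩ := hGne
  have hmemF : ∀ z, z ∈ F ↔ ∃ g ∈ G, ∃ w : ℝ, 0 ≤ w ∧ w ≤ 1 ∧
      z = (1 - w) • L d g + w • ep d s := by
    intro z
    constructor
    · intro hz
      obtain ⟨p, hp, w, hw0, hw1, heqz, hwG⟩ := hFdecomp z hz
      rcases lt_or_eq_of_le hw1 with hlt | heq1
      · exact ⟨p, hwG hlt, w, hw0, hw1, heqz⟩
      · refine ⟨g0, hg0, 1, zero_le_one, le_refl 1, ?_⟩
        rw [heqz, heq1]
        simp
    · rintro ⟨g, hg, w, hw0, hw1, rfl⟩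
      apply hFconv.segment_subset (hGF g hg) hin
      exact ⟨1 - w, w, by linarith, hw0, by ring, rfl⟩
  have hF2 : F = convexHull ℝ (L d '' G ∪ {ep d s}) := by
    apply Set.Subset.antisymm
    · intro z hz
      obtain ⟨g, hg, w, hw0, hw1, rfl⟩ := (hmemF z).1 hz
      have hm1 : L d g ∈ L d '' G ∪ {ep d s} := Or.inl ⟨g, hg, rfl⟩
      have hm2 : ep d s ∈ L d '' G ∪ {ep d s} := Or.inr rfl
      exact segment_subset_convexHull hm1 hm2 ⟨1 - w, w, by linarith, hw0, by ring, rfl⟩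
    · apply convexHull_min ?_ hFconv
      rintro z (⟨g, hg, rfl⟩ | hz)
      · exact hGF g hg
      · rw [mem_singleton_iff] at hz
        rw [hz]
        exact hin
  have hGdim : fdim G = d - 1 := by
    have h := hF2 ▸ hFdim'
    rw [fdim_convexHull, fdim_union_ep hg0 hsne] at h
    omega
  have hGfacet : IsFacet P G := ⟨hGface, hGdim⟩
  obtain ⟨hBli, hBspan⟩ := hfacets G hGfacet
  set B := Set.extremePoints ℝ G with hBdef
  have hlast_combo : ∀ (g : Fin d → ℝ) (w : ℝ),
      ((1 - w) • L d g + w • ep d s) (Fin.last d) = w * s := by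
    intro g w
    simp
  have hExt : Set.extremePoints ℝ F = insert (ep d s) (L d '' B) := by
    ext x
    constructor
    · intro hx
      have hxM : x ∈ L d '' G ∪ {ep d s} :=
        extremePoints_convexHull_subset (A := L d '' G ∪ {ep d s}) (by rw [← hF2]; exact hx)
      rcases hxM with ⟨g, hg, rfl⟩ | hxe
      · right
        refine ⟨g, ?_, rfl⟩
        rw [hBdef, mem_extremePoints]
        refine ⟨hg, fun g1 hg1 g2 hg2 hseg => ?_⟩
        obtain ⟨a1, a2, ha1, ha2, hsum, heq2⟩ := hseg
        have hseg' : L d g ∈ openSegment ℝ (L d g1) (L d g2) :=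
          ⟨a1, a2, ha1, ha2, hsum, by rw [← heq2, map_add, map_smul, map_smul]⟩
        obtain ⟨e1, e2⟩ := (mem_extremePoints.1 hx).2 _ (hGF g1 hg1) _ (hGF g2 hg2) hseg'
        exact ⟨L_inj e1, L_inj e2⟩
      · left
        exact hxe
    · intro hx
      rw [Set.mem_insert_iff] at hx
      rcases hx with rfl | ⟨b0, hb0, rfl⟩
      · rw [mem_extremePoints]
        refine ⟨hin, fun z1 hz1 z2 hz2 hseg => ?_⟩
        obtain ⟨g1, hg1, w1, hw10, hw11, rfl⟩ := (hmemF z1).1 hz1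
        obtain ⟨g2, hg2, w2, hw20, hw21, rfl⟩ := (hmemF z2).1 hz2
        obtain ⟨a1, a2, ha1, ha2, hsum, heq2⟩ := hseg
        have hlasteq : a1 * (w1 * s) + a2 * (w2 * s) = s := by
          have h := congrFun heq2 (Fin.last d)
          simpa [hlast_combo] using h
        have hws : a1 * w1 + a2 * w2 = 1 := by
          apply mul_right_cancel₀ hsne
          rw [one_mul]
          calc (a1 * w1 + a2 * w2) * s = a1 * (w1 * s) + a2 * (w2 * s) := by ring
          _ = s := hlasteq
        have hw1e : w1 = 1 := by
          refine le_antisymm hw11 ?_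
          nlinarith [mul_le_mul_of_nonneg_left hw21 (le_of_lt ha2)]
        have hw2e : w2 = 1 := by
          refine le_antisymm hw21 ?_
          nlinarith [mul_le_mul_of_nonneg_left hw11 (le_of_lt ha1)]
        constructor
        · rw [hw1e]; simp
        · rw [hw2e]; simp
      · have hb0G : b0 ∈ G := extremePoints_subset hb0
        rw [mem_extremePoints]
        refine ⟨hGF b0 hb0G, fun z1 hz1 z2 hz2 hseg => ?_⟩
        obtain ⟨g1, hg1, w1, hw10, hw11, rfl⟩ := (hmemF z1).1 hz1
        obtain ⟨g2, hg2, w2, hw20, hw21, rfl⟩ := (hmemF z2).1 hz2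
        obtain ⟨a1, a2, ha1, ha2, hsum, heq2⟩ := hseg
        have hlasteq : a1 * (w1 * s) + a2 * (w2 * s) = 0 := by
          have h := congrFun heq2 (Fin.last d)
          simpa [hlast_combo] using h
        have hws : a1 * w1 + a2 * w2 = 0 := by
          apply mul_right_cancel₀ hsne
          rw [zero_mul]
          calc (a1 * w1 + a2 * w2) * s = a1 * (w1 * s) + a2 * (w2 * s) := by ring
          _ = 0 := hlasteq
        have hw1e : w1 = 0 := by
          refine le_antisymm ?_ hw10
          nlinarith [mul_nonneg (le_of_lt ha2) hw20]
        have hw2e : w2 = 0 := by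
          refine le_antisymm ?_ hw20
          nlinarith [mul_nonneg (le_of_lt ha1) hw10]
        rw [hw1e, hw2e] at heq2
        simp only [sub_zero, one_smul, zero_smul, add_zero] at heq2
        have hcomp : a1 • g1 + a2 • g2 = b0 := by
          funext j
          have h := congrFun heq2 j.castSucc
          simpa using h
        obtain ⟨e1, e2⟩ := (mem_extremePoints.1 hb0).2 _ hg1 _ hg2 ⟨a1, a2, ha1, ha2, hsum, hcomp⟩
        constructor
        · rw [hw1e, e1]; simp
        · rw [hw2e, e2]; simp
  have hnotmem : ep d s ∉ L d '' B := by
    rintro ⟨g, hg, heqg⟩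
    have h := congrFun heqg (Fin.last d)
    simp at h
    exact hsne h.symm
  have hli : LinearIndependent ℝ
      (fun v : (insert (ep d s) (L d '' B) : Set (Fin (d + 1) → ℝ)) =>
        (v : Fin (d + 1) → ℝ)) := by
    show LinearIndepOn ℝ id _
    rw [linearIndepOn_id_insert hnotmem]
    refine ⟨?_, ?_⟩
    · have h1 : LinearIndependent ℝ (fun v : B => L d (v : Fin d → ℝ)) :=
        hBli.map' (L d) (LinearMap.ker_eq_bot.2 L_inj)
      exact LinearIndepOn.id_image h1
    · intro hmem
      have hsub : L d '' B ⊆ (LinearMap.ker (lst d) : Set (Fin (d + 1) → ℝ)) := by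
        rintro z ⟨g, hg, rfl⟩
        simp [LinearMap.mem_ker]
      have h := Submodule.span_le.2 hsub hmem
      rw [LinearMap.mem_ker, lst_apply, ep_last] at h
      exact hsne h
  have hspan : Submodule.span ℤ (insert (ep d s) (L d '' B)) = latticeSubmodule (d + 1) := by
    apply le_antisymm
    · rw [Submodule.span_le]
      rintro z (rfl | ⟨g, hg, rfl⟩)
      · rw [SetLike.mem_coe, mem_latticeSubmodule_iff]
        intro i
        refine Fin.lastCases ?_ (fun j => ?_) i
        · rcases hs1 with rfl | rfl
          · exact ⟨1, by simp⟩
          · exact ⟨-1, by simp⟩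
        · exact ⟨0, by simp⟩
      · rw [SetLike.mem_coe, mem_latticeSubmodule_iff]
        have hglat : IsLatticePt g := by
          rw [← mem_latticeSubmodule_iff, ← hBspan]
          exact Submodule.subset_span hg
        intro i
        refine Fin.lastCases ?_ (fun j => ?_) i
        · exact ⟨0, by simp⟩
        · obtain ⟨n, hn⟩ := hglat j
          exact ⟨n, by simpa using hn⟩
    · rw [latticeSubmodule, Submodule.span_le]
      intro x hx
      rw [Set.mem_setOf_eq] at hx
      rw [SetLike.mem_coe]
      obtain ⟨n, hn⟩ := hx (Fin.last d)
      have hxeq : ∃ m : ℤ, x = L d (Fin.init x) + m • ep d s := by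
        rcases hs1 with rfl | rfl
        · refine ⟨n, ?_⟩
          funext i
          refine Fin.lastCases ?_ (fun j => ?_) i
          · have h1 : (n • ep d 1) (Fin.last d) = (n : ℝ) := by
              have h2 : (n • ep d 1) (Fin.last d) = n • (ep d 1 (Fin.last d)) := rfl
              rw [h2, ep_last, zsmul_eq_mul, mul_one]
            rw [Pi.add_apply, L_last, h1, zero_add, hn]
          · have h1 : (n • ep d 1) (j.castSucc) = 0 := by
              have h2 : (n • ep d 1) (j.castSucc) = n • (ep d 1 j.castSucc) := rfl
              rw [h2, ep_castSucc, smul_zero]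
            rw [Pi.add_apply, L_castSucc, h1, add_zero]
            rfl
        · refine ⟨-n, ?_⟩
          funext i
          refine Fin.lastCases ?_ (fun j => ?_) i
          · have h1 : ((-n) • ep d (-1)) (Fin.last d) = (n : ℝ) := by
              have h2 : ((-n) • ep d (-1)) (Fin.last d) = (-n) • (ep d (-1) (Fin.last d)) := rfl
              rw [h2, ep_last, zsmul_eq_mul]
              push_cast
              ring
            rw [Pi.add_apply, L_last, h1, zero_add, hn]
          · have h1 : ((-n) • ep d (-1)) (j.castSucc) = 0 := by
              have h2 : ((-n) • ep d (-1)) (j.castSucc) = (-n) • (ep d (-1) j.castSucc) := rfl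
              rw [h2, ep_castSucc, smul_zero]
            rw [Pi.add_apply, L_castSucc, h1, add_zero]
            rfl
      obtain ⟨m, hxeq⟩ := hxeq
      rw [hxeq]
      apply Submodule.add_mem
      · have hinit : Fin.init x ∈ Submodule.span ℤ B := by
          rw [hBspan, mem_latticeSubmodule_iff]
          intro j
          exact hx j.castSucc
        have hmap := Submodule.mem_map_of_mem (f := (L d).restrictScalars ℤ) hinit
        rw [Submodule.map_span] at hmap
        have himg : (((L d).restrictScalars ℤ) '' B : Set (Fin (d + 1) → ℝ)) = L d '' B := rfl
        rw [himg] at hmap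
        exact Submodule.span_mono (Set.subset_insert _ _) hmap
      · exact Submodule.smul_mem _ m (Submodule.subset_span (Set.mem_insert _ _))
  rw [IsLatticeBasisSet, hExt]
  exact ⟨hli, hspan⟩

lemma not_smoothFano_zero (P : Set (Fin 0 → ℝ)) (hP : IsSmoothFano P) : False := by
  obtain ⟨hlp, hint, hdim, hfacets⟩ := hP
  have h0P : (0 : Fin 0 → ℝ) ∈ P := interior_subset hint
  have hface : IsFacet P P := by
    refine ⟨⟨0, 0, fun x _ => by simp [dotp_zero, dotp], ?_⟩, ?_⟩
    · ext x
      simp [dotp]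
    · rw [hdim]
  obtain ⟨hli, -⟩ := hfacets P hface
  have h0ext : (0 : Fin 0 → ℝ) ∈ Set.extremePoints ℝ P := by
    rw [mem_extremePoints]
    exact ⟨h0P, fun x₁ _ x₂ _ _ => ⟨Subsingleton.elim _ _, Subsingleton.elim _ _⟩⟩
  exact hli.ne_zero ⟨0, h0ext⟩ (Subsingleton.elim _ _)

end Bipyr

/-- The bipyramid `conv((P×{0}) ∪ {−e_{d+1}, e_{d+1}})` over a smooth Fano
polytope is a smooth Fano polytope. -/
theorem stmt13 {d : ℕ} (P : Set (Fin d → ℝ)) (hP : IsSmoothFano P) :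
    IsSmoothFano (convexHull ℝ
      ((fun x : Fin d → ℝ => Fin.snoc x (0 : ℝ)) '' P ∪
        {Fin.snoc (0 : Fin d → ℝ) (-1 : ℝ), Fin.snoc (0 : Fin d → ℝ) (1 : ℝ)})) := by
  classical
  rcases Nat.eq_zero_or_pos d with rfl | hd
  · exact (Bipyr.not_smoothFano_zero P hP).elim
  obtain ⟨⟨V, hVlat, hVP⟩, hint, hdim, hfacets⟩ := hP
  have hconv : Convex ℝ P := hVP ▸ convex_convexHull ℝ _
  show IsSmoothFano (convexHull ℝ (Bipyr.Qset d P))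
  refine ⟨?_, Bipyr.interior_Q hconv hint, Bipyr.fdim_Q hconv hint,
    fun F hF => Bipyr.facet_basis hd hconv hint hfacets hF⟩
  refine ⟨V.image (fun x => Fin.snoc x (0 : ℝ)) ∪ {Bipyr.ep d (-1), Bipyr.ep d 1}, ?_, ?_⟩
  · intro x hx
    rw [Finset.mem_union] at hx
    rcases hx with hx | hx
    · rw [Finset.mem_image] at hx
      obtain ⟨v, hv, rfl⟩ := hx
      intro i
      refine Fin.lastCases ?_ (fun j => ?_) i
      · exact ⟨0, by simp⟩
      · obtain ⟨n, hn⟩ := hVlat v hv j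
        exact ⟨n, by simpa using hn⟩
    · rw [Finset.mem_insert, Finset.mem_singleton] at hx
      rcases hx with rfl | rfl
      · intro i
        refine Fin.lastCases ?_ (fun j => ?_) i
        · exact ⟨-1, by simp⟩
        · exact ⟨0, by simp⟩
      · intro i
        refine Fin.lastCases ?_ (fun j => ?_) i
        · exact ⟨1, by simp⟩
        · exact ⟨0, by simp⟩
  · rw [Bipyr.Qset, Bipyr.L_image, hVP, (Bipyr.L d).image_convexHull,
      convexHull_convexHull_union_left]
    congr 1
    rw [Finset.coe_union, Finset.coe_image]
    congr 1
    rw [Finset.coe_insert, Finset.coe_singleton]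
end
end
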